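/- Let (η, ϕ) be a smooth solution of the two-dimensional water-wave system on [0,T]. Then L₁∫₀ᵀ Θ(t,L₁) dt = (T/2)·𝓗 + (L₁/2)∫₀ᵀ∫₋ₕ^{m(t)} (∂_yϕ(t,L₁,y))² dy dt + (1/2)∫₀ᵀ∫₀^{L₁} (h + (7/4)η(t,x))·(∂ₓϕ(t,x,−h))² dx dt − (1/4)[∫₀^{L₁} η(t,x)ψ(t,x) dx]ₜ₌₀^{t=T} − [∫₀^{L₁} x·η(t,x)·∂ₓψ(t,x) dx]ₜ₌₀^{t=T} − (7/4)∫₀ᵀ∬_{Ω(t)} (∂ₓη)(∂ₓϕ)(∂_yϕ) dx dy dt, where 𝓗 := 𝓗(0) (the energy 𝓗(t) being independent of t) and [F(t)]ₜ₌₀^{t=T} denotes F(T) − F(0). -/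

import Mathlib

open Real Set MeasureTheory

noncomputable section

/-- `∂ₓϕ(t,x,y)` -/
def phiX (ϕ : ℝ → ℝ → ℝ → ℝ) (t x y : ℝ) : ℝ := deriv (fun x' => ϕ t x' y) x

/-- `∂_yϕ(t,x,y)` -/
def phiY (ϕ : ℝ → ℝ → ℝ → ℝ) (t x y : ℝ) : ℝ := deriv (fun y' => ϕ t x y') y

/-- `∂ₜϕ(t,x,y)` -/
def phiT (ϕ : ℝ → ℝ → ℝ → ℝ) (t x y : ℝ) : ℝ := deriv (fun s => ϕ s x y) t

/-- `∂ₓη(t,x)` -/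
def etaX (η : ℝ → ℝ → ℝ) (t x : ℝ) : ℝ := deriv (fun x' => η t x') x

/-- `∂ₜη(t,x)` -/
def etaT (η : ℝ → ℝ → ℝ) (t x : ℝ) : ℝ := deriv (fun s => η s x) t

/-- the trace `ψ(t,x) = ϕ(t,x,η(t,x))` -/
def psi (η : ℝ → ℝ → ℝ) (ϕ : ℝ → ℝ → ℝ → ℝ) (t x : ℝ) : ℝ := ϕ t x (η t x)

/-- `∂ₜψ(t,x)` -/
def psiT (η : ℝ → ℝ → ℝ) (ϕ : ℝ → ℝ → ℝ → ℝ) (t x : ℝ) : ℝ :=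
  deriv (fun s => psi η ϕ s x) t

/-- `∂ₓψ(t,x)` -/
def psiX (η : ℝ → ℝ → ℝ) (ϕ : ℝ → ℝ → ℝ → ℝ) (t x : ℝ) : ℝ :=
  deriv (fun x' => psi η ϕ t x') x

/-- `Θ(t,x) = -η ∂ₜψ - (g/2) η²` -/
def Theta (g : ℝ) (η : ℝ → ℝ → ℝ) (ϕ : ℝ → ℝ → ℝ → ℝ) (t x : ℝ) : ℝ :=
  -(η t x) * psiT η ϕ t x - g / 2 * (η t x) ^ 2

/-- the energy `𝓗(t)` -/
def energy2D (L₁ h g : ℝ) (η : ℝ → ℝ → ℝ) (ϕ : ℝ → ℝ → ℝ → ℝ) (t : ℝ) : ℝ :=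
  g / 2 * (∫ x in (0:ℝ)..L₁, (η t x) ^ 2)
    + 1 / 2 * ∫ x in (0:ℝ)..L₁, ∫ y in (-h)..(η t x),
        ((phiX ϕ t x y) ^ 2 + (phiY ϕ t x y) ^ 2)

/-- A smooth solution of the two-dimensional water-wave system on `[0,T]`:
`η : [0,T] × [0,L₁] → ℝ` and `ϕ` on the fluid domain (both given as smooth total
functions), satisfying the incompressibility, boundary, kinematic and Bernoulli
(dynamic) conditions, together with `η ≥ -h/2`, zero mean, and the right-angle
contact conditions `∂ₓη(t,0) = ∂ₓη(t,L₁) = 0`. -/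
structure IsWW2D (L₁ h g T : ℝ) (η : ℝ → ℝ → ℝ) (ϕ : ℝ → ℝ → ℝ → ℝ) : Prop where
  smooth_eta : ContDiff ℝ (⊤ : ℕ∞) (fun p : ℝ × ℝ => η p.1 p.2)
  smooth_phi : ContDiff ℝ (⊤ : ℕ∞) (fun p : ℝ × ℝ × ℝ => ϕ p.1 p.2.1 p.2.2)
  eta_lower : ∀ t ∈ Icc (0:ℝ) T, ∀ x ∈ Icc (0:ℝ) L₁, -h / 2 ≤ η t x
  eta_mean : ∀ t ∈ Icc (0:ℝ) T, (∫ x in (0:ℝ)..L₁, η t x) = 0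
  laplace : ∀ t ∈ Icc (0:ℝ) T, ∀ x ∈ Icc (0:ℝ) L₁, ∀ y ∈ Icc (-h) (η t x),
    deriv (fun x' => phiX ϕ t x' y) x + deriv (fun y' => phiY ϕ t x y') y = 0
  bc_left : ∀ t ∈ Icc (0:ℝ) T, ∀ y ∈ Icc (-h) (η t 0), phiX ϕ t 0 y = 0
  bc_right : ∀ t ∈ Icc (0:ℝ) T, ∀ y ∈ Icc (-h) (η t L₁), phiX ϕ t L₁ y = 0
  bc_bottom : ∀ t ∈ Icc (0:ℝ) T, ∀ x ∈ Icc (0:ℝ) L₁, phiY ϕ t x (-h) = 0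
  kinematic : ∀ t ∈ Icc (0:ℝ) T, ∀ x ∈ Icc (0:ℝ) L₁,
    etaT η t x = phiY ϕ t x (η t x) - etaX η t x * phiX ϕ t x (η t x)
  bernoulli : ∀ t ∈ Icc (0:ℝ) T, ∀ x ∈ Icc (0:ℝ) L₁,
    phiT ϕ t x (η t x)
      + 1 / 2 * ((phiX ϕ t x (η t x)) ^ 2 + (phiY ϕ t x (η t x)) ^ 2) + g * η t x = 0
  etaX_left : ∀ t ∈ Icc (0:ℝ) T, etaX η t 0 = 0
  etaX_right : ∀ t ∈ Icc (0:ℝ) T, etaX η t L₁ = 0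

namespace WW
open intervalIntegral Filter Asymptotics


lemma top_add_one_le : ((⊤:ℕ∞) + 1 : WithTop ℕ∞) ≤ ((⊤:ℕ∞) : WithTop ℕ∞) := by
  exact_mod_cast (le_top : (⊤:ℕ∞) + 1 ≤ ⊤)

section PDgen
variable {E : Type*} [NormedAddCommGroup E] [NormedSpace ℝ E] {F : E → ℝ}

lemma hasDerivAt_curve (hF : ContDiff ℝ (⊤:ℕ∞) F) {c : ℝ → E} {v : E} {t : ℝ}
    (hc : HasDerivAt c v t) :
    HasDerivAt (fun s => F (c s)) (fderiv ℝ F (c t) v) t :=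
  ((hF.differentiable (by simp) (c t)).hasFDerivAt).comp_hasDerivAt t hc

lemma contDiff_pd (hF : ContDiff ℝ (⊤:ℕ∞) F) (v : E) :
    ContDiff ℝ (⊤:ℕ∞) (fun p => fderiv ℝ F p v) :=
  (hF.fderiv_right top_add_one_le).clm_apply contDiff_const

lemma clairaut (hF : ContDiff ℝ (⊤:ℕ∞) F) (v w : E) (p : E) :
    fderiv ℝ (fun q => fderiv ℝ F q v) p w = fderiv ℝ (fun q => fderiv ℝ F q w) p v := by
  have hdf : Differentiable ℝ (fderiv ℝ F) :=
    (hF.fderiv_right top_add_one_le).differentiable (by simp)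
  have h1 : ∀ u : E, fderiv ℝ (fun q => fderiv ℝ F q u) p
      = (fderiv ℝ (fderiv ℝ F) p).flip u := by
    intro u
    rw [fderiv_clm_apply (hdf p) (differentiableAt_const u)]
    simp
  rw [h1 v, h1 w]
  simp only [ContinuousLinearMap.flip_apply]
  exact second_derivative_symmetric
    (fun y => ((hF.differentiable (by simp)) y).hasFDerivAt)
    ((hdf p).hasFDerivAt) w v

end PDgen

/-! ### two-variable API -/
section API2
variable {f : ℝ → ℝ → ℝ}

lemma hasDerivAt_p1 (hf : ContDiff ℝ (⊤:ℕ∞) (Function.uncurry f)) (t x : ℝ) :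
    HasDerivAt (fun s => f s x) (deriv (fun s => f s x) t) t := by
  have h := hasDerivAt_curve hf ((hasDerivAt_id t).prodMk (hasDerivAt_const t x))
  exact h.differentiableAt.hasDerivAt

lemma hasDerivAt_p2 (hf : ContDiff ℝ (⊤:ℕ∞) (Function.uncurry f)) (t x : ℝ) :
    HasDerivAt (fun x' => f t x') (deriv (fun x' => f t x') x) x := by
  have h := hasDerivAt_curve hf ((hasDerivAt_const x t).prodMk (hasDerivAt_id x))
  exact h.differentiableAt.hasDerivAt

lemma contDiff_p1 (hf : ContDiff ℝ (⊤:ℕ∞) (Function.uncurry f)) :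
    ContDiff ℝ (⊤:ℕ∞) (fun p : ℝ × ℝ => deriv (fun s => f s p.2) p.1) := by
  have : (fun p : ℝ × ℝ => deriv (fun s => f s p.2) p.1)
      = fun p => fderiv ℝ (Function.uncurry f) p (1, 0) := by
    funext p
    exact (hasDerivAt_curve hf ((hasDerivAt_id p.1).prodMk (hasDerivAt_const p.1 p.2))).deriv
  rw [this]; exact contDiff_pd hf _

lemma contDiff_p2 (hf : ContDiff ℝ (⊤:ℕ∞) (Function.uncurry f)) :
    ContDiff ℝ (⊤:ℕ∞) (fun p : ℝ × ℝ => deriv (fun x' => f p.1 x') p.2) := by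
  have : (fun p : ℝ × ℝ => deriv (fun x' => f p.1 x') p.2)
      = fun p => fderiv ℝ (Function.uncurry f) p (0, 1) := by
    funext p
    exact (hasDerivAt_curve hf ((hasDerivAt_const p.2 p.1).prodMk (hasDerivAt_id p.2))).deriv
  rw [this]; exact contDiff_pd hf _

/-- mixed partials commute for a smooth function of two real variables -/
lemma p_comm (hf : ContDiff ℝ (⊤:ℕ∞) (Function.uncurry f)) (t x : ℝ) :
    deriv (fun s => deriv (fun x' => f s x') x) t
      = deriv (fun x' => deriv (fun s => f s x') t) x := by
  have e2 : ∀ s x', deriv (fun u => f s u) x'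
      = (fun p : ℝ × ℝ => fderiv ℝ (Function.uncurry f) p (0,1)) (s, x') := fun s x' =>
    (hasDerivAt_curve hf ((hasDerivAt_const x' s).prodMk (hasDerivAt_id x'))).deriv
  have e1 : ∀ s x', deriv (fun u => f u x') s
      = (fun p : ℝ × ℝ => fderiv ℝ (Function.uncurry f) p (1,0)) (s, x') := fun s x' =>
    (hasDerivAt_curve hf ((hasDerivAt_id s).prodMk (hasDerivAt_const s x'))).deriv
  calc deriv (fun s => deriv (fun x' => f s x') x) t
      = deriv (fun s => (fun p : ℝ × ℝ => fderiv ℝ (Function.uncurry f) p (0,1)) (s, x)) t := by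
        simp only [e2]
    _ = fderiv ℝ (fun p : ℝ × ℝ => fderiv ℝ (Function.uncurry f) p (0,1)) (t, x) (1, 0) :=
        (hasDerivAt_curve (contDiff_pd hf _)
          ((hasDerivAt_id t).prodMk (hasDerivAt_const t x))).deriv
    _ = fderiv ℝ (fun p : ℝ × ℝ => fderiv ℝ (Function.uncurry f) p (1,0)) (t, x) (0, 1) :=
        clairaut hf _ _ _
    _ = deriv (fun x' => (fun p : ℝ × ℝ => fderiv ℝ (Function.uncurry f) p (1,0)) (t, x')) x :=
        ((hasDerivAt_curve (contDiff_pd hf _)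
          ((hasDerivAt_const x t).prodMk (hasDerivAt_id x))).deriv).symm
    _ = deriv (fun x' => deriv (fun s => f s x') t) x := by simp only [e1]

end API2

/-! ### three-variable API -/
section API3
variable {f : ℝ → ℝ → ℝ → ℝ}

def unc3 (f : ℝ → ℝ → ℝ → ℝ) : ℝ × ℝ × ℝ → ℝ := fun p => f p.1 p.2.1 p.2.2

lemma curve1 (t x y : ℝ) : HasDerivAt (fun s : ℝ => ((s, x, y) : ℝ × ℝ × ℝ))
    ((1:ℝ), (0:ℝ), (0:ℝ)) t :=
  (hasDerivAt_id t).prodMk ((hasDerivAt_const t x).prodMk (hasDerivAt_const t y))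

lemma curve2 (t x y : ℝ) : HasDerivAt (fun x' : ℝ => ((t, x', y) : ℝ × ℝ × ℝ))
    ((0:ℝ), (1:ℝ), (0:ℝ)) x :=
  (hasDerivAt_const x t).prodMk ((hasDerivAt_id x).prodMk (hasDerivAt_const x y))

lemma curve3 (t x y : ℝ) : HasDerivAt (fun y' : ℝ => ((t, x, y') : ℝ × ℝ × ℝ))
    ((0:ℝ), (0:ℝ), (1:ℝ)) y :=
  (hasDerivAt_const y t).prodMk ((hasDerivAt_const y x).prodMk (hasDerivAt_id y))

lemma hasDerivAt_q1 (hf : ContDiff ℝ (⊤:ℕ∞) (unc3 f)) (t x y : ℝ) :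
    HasDerivAt (fun s => f s x y) (deriv (fun s => f s x y) t) t :=
  (hasDerivAt_curve hf (curve1 t x y)).differentiableAt.hasDerivAt

lemma hasDerivAt_q2 (hf : ContDiff ℝ (⊤:ℕ∞) (unc3 f)) (t x y : ℝ) :
    HasDerivAt (fun x' => f t x' y) (deriv (fun x' => f t x' y) x) x :=
  (hasDerivAt_curve hf (curve2 t x y)).differentiableAt.hasDerivAt

lemma hasDerivAt_q3 (hf : ContDiff ℝ (⊤:ℕ∞) (unc3 f)) (t x y : ℝ) :
    HasDerivAt (fun y' => f t x y') (deriv (fun y' => f t x y') y) y :=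
  (hasDerivAt_curve hf (curve3 t x y)).differentiableAt.hasDerivAt

lemma contDiff_q1 (hf : ContDiff ℝ (⊤:ℕ∞) (unc3 f)) :
    ContDiff ℝ (⊤:ℕ∞) (unc3 (fun t x y => deriv (fun s => f s x y) t)) := by
  have : unc3 (fun t x y => deriv (fun s => f s x y) t)
      = fun p => fderiv ℝ (unc3 f) p (1, 0, 0) := by
    funext p
    exact (hasDerivAt_curve hf (curve1 p.1 p.2.1 p.2.2)).deriv
  rw [this]; exact contDiff_pd hf _

lemma contDiff_q2 (hf : ContDiff ℝ (⊤:ℕ∞) (unc3 f)) :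
    ContDiff ℝ (⊤:ℕ∞) (unc3 (fun t x y => deriv (fun x' => f t x' y) x)) := by
  have : unc3 (fun t x y => deriv (fun x' => f t x' y) x)
      = fun p => fderiv ℝ (unc3 f) p (0, 1, 0) := by
    funext p
    exact (hasDerivAt_curve hf (curve2 p.1 p.2.1 p.2.2)).deriv
  rw [this]; exact contDiff_pd hf _

lemma contDiff_q3 (hf : ContDiff ℝ (⊤:ℕ∞) (unc3 f)) :
    ContDiff ℝ (⊤:ℕ∞) (unc3 (fun t x y => deriv (fun y' => f t x y') y)) := by
  have : unc3 (fun t x y => deriv (fun y' => f t x y') y)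
      = fun p => fderiv ℝ (unc3 f) p (0, 0, 1) := by
    funext p
    exact (hasDerivAt_curve hf (curve3 p.1 p.2.1 p.2.2)).deriv
  rw [this]; exact contDiff_pd hf _

/-- mixed partials commute, slots 2 and 3 -/
lemma q_comm23 (hf : ContDiff ℝ (⊤:ℕ∞) (unc3 f)) (t x y : ℝ) :
    deriv (fun y' => deriv (fun x' => f t x' y') x) y
      = deriv (fun x' => deriv (fun y' => f t x' y') y) x := by
  have e2 : ∀ a b c, deriv (fun x' => f a x' c) b
      = (fun p => fderiv ℝ (unc3 f) p (0,1,0)) ((a,b,c) : ℝ×ℝ×ℝ) := fun a b c =>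
    (hasDerivAt_curve hf (curve2 a b c)).deriv
  have e3 : ∀ a b c, deriv (fun y' => f a b y') c
      = (fun p => fderiv ℝ (unc3 f) p (0,0,1)) ((a,b,c) : ℝ×ℝ×ℝ) := fun a b c =>
    (hasDerivAt_curve hf (curve3 a b c)).deriv
  calc deriv (fun y' => deriv (fun x' => f t x' y') x) y
      = deriv (fun y' => (fun p => fderiv ℝ (unc3 f) p (0,1,0)) ((t,x,y') : ℝ×ℝ×ℝ)) y := by
        simp only [e2]
    _ = fderiv ℝ (fun p => fderiv ℝ (unc3 f) p (0,1,0)) (t,x,y) (0,0,1) :=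
        (hasDerivAt_curve (contDiff_pd hf _) (curve3 t x y)).deriv
    _ = fderiv ℝ (fun p => fderiv ℝ (unc3 f) p (0,0,1)) (t,x,y) (0,1,0) := clairaut hf _ _ _
    _ = deriv (fun x' => (fun p => fderiv ℝ (unc3 f) p (0,0,1)) ((t,x',y) : ℝ×ℝ×ℝ)) x :=
        ((hasDerivAt_curve (contDiff_pd hf _) (curve2 t x y)).deriv).symm
    _ = deriv (fun x' => deriv (fun y' => f t x' y') y) x := by simp only [e3]

/-- mixed partials commute, slots 1 and 2 -/
lemma q_comm12 (hf : ContDiff ℝ (⊤:ℕ∞) (unc3 f)) (t x y : ℝ) :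
    deriv (fun s => deriv (fun x' => f s x' y) x) t
      = deriv (fun x' => deriv (fun s => f s x' y) t) x := by
  have e2 : ∀ a b c, deriv (fun x' => f a x' c) b
      = (fun p => fderiv ℝ (unc3 f) p (0,1,0)) ((a,b,c) : ℝ×ℝ×ℝ) := fun a b c =>
    (hasDerivAt_curve hf (curve2 a b c)).deriv
  have e1 : ∀ a b c, deriv (fun s => f s b c) a
      = (fun p => fderiv ℝ (unc3 f) p (1,0,0)) ((a,b,c) : ℝ×ℝ×ℝ) := fun a b c =>
    (hasDerivAt_curve hf (curve1 a b c)).deriv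
  calc deriv (fun s => deriv (fun x' => f s x' y) x) t
      = deriv (fun s => (fun p => fderiv ℝ (unc3 f) p (0,1,0)) ((s,x,y) : ℝ×ℝ×ℝ)) t := by
        simp only [e2]
    _ = fderiv ℝ (fun p => fderiv ℝ (unc3 f) p (0,1,0)) (t,x,y) (1,0,0) :=
        (hasDerivAt_curve (contDiff_pd hf _) (curve1 t x y)).deriv
    _ = fderiv ℝ (fun p => fderiv ℝ (unc3 f) p (1,0,0)) (t,x,y) (0,1,0) := clairaut hf _ _ _
    _ = deriv (fun x' => (fun p => fderiv ℝ (unc3 f) p (1,0,0)) ((t,x',y) : ℝ×ℝ×ℝ)) x :=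
        ((hasDerivAt_curve (contDiff_pd hf _) (curve2 t x y)).deriv).symm
    _ = deriv (fun x' => deriv (fun s => f s x' y) t) x := by simp only [e1]

/-- mixed partials commute, slots 1 and 3 -/
lemma q_comm13 (hf : ContDiff ℝ (⊤:ℕ∞) (unc3 f)) (t x y : ℝ) :
    deriv (fun s => deriv (fun y' => f s x y') y) t
      = deriv (fun y' => deriv (fun s => f s x y') t) y := by
  have e3 : ∀ a b c, deriv (fun y' => f a b y') c
      = (fun p => fderiv ℝ (unc3 f) p (0,0,1)) ((a,b,c) : ℝ×ℝ×ℝ) := fun a b c =>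
    (hasDerivAt_curve hf (curve3 a b c)).deriv
  have e1 : ∀ a b c, deriv (fun s => f s b c) a
      = (fun p => fderiv ℝ (unc3 f) p (1,0,0)) ((a,b,c) : ℝ×ℝ×ℝ) := fun a b c =>
    (hasDerivAt_curve hf (curve1 a b c)).deriv
  calc deriv (fun s => deriv (fun y' => f s x y') y) t
      = deriv (fun s => (fun p => fderiv ℝ (unc3 f) p (0,0,1)) ((s,x,y) : ℝ×ℝ×ℝ)) t := by
        simp only [e3]
    _ = fderiv ℝ (fun p => fderiv ℝ (unc3 f) p (0,0,1)) (t,x,y) (1,0,0) :=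
        (hasDerivAt_curve (contDiff_pd hf _) (curve1 t x y)).deriv
    _ = fderiv ℝ (fun p => fderiv ℝ (unc3 f) p (1,0,0)) (t,x,y) (0,0,1) := clairaut hf _ _ _
    _ = deriv (fun y' => (fun p => fderiv ℝ (unc3 f) p (1,0,0)) ((t,x,y') : ℝ×ℝ×ℝ)) y :=
        ((hasDerivAt_curve (contDiff_pd hf _) (curve3 t x y)).deriv).symm
    _ = deriv (fun y' => deriv (fun s => f s x y') t) y := by simp only [e1]

end API3


/-- Differentiation under the integral sign, fixed endpoints, continuous data. -/
lemma hasDerivAt_param_integral {f f' : ℝ → ℝ → ℝ} (a b t₀ : ℝ)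
    (hcf : Continuous (Function.uncurry f)) (hcf' : Continuous (Function.uncurry f'))
    (hd : ∀ t x, HasDerivAt (fun s => f s x) (f' t x) t) :
    HasDerivAt (fun t => ∫ x in a..b, f t x) (∫ x in a..b, f' t₀ x) t₀ := by
  have hcont : ∀ t, Continuous (f t) := fun t => hcf.comp (Continuous.prodMk_right t)
  have hcont' : ∀ t, Continuous (f' t) := fun t => hcf'.comp (Continuous.prodMk_right t)
  obtain ⟨M, hM⟩ := (((isCompact_Icc (a := t₀ - 1) (b := t₀ + 1)).prod
      (isCompact_uIcc (a := a) (b := b))).exists_bound_of_continuousOn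
      hcf'.continuousOn)
  have main := intervalIntegral.hasDerivAt_integral_of_dominated_loc_of_deriv_le
      (F := f) (F' := f') (x₀ := t₀) (bound := fun _ => M) (a := a) (b := b)
      (μ := volume) (s := Metric.ball t₀ 1) (Metric.ball_mem_nhds t₀ one_pos)
      (Filter.Eventually.of_forall fun t => (hcont t).aestronglyMeasurable)
      ((hcont t₀).intervalIntegrable a b)
      ((hcont' t₀).aestronglyMeasurable)
      ?_ intervalIntegrable_const
      (Filter.Eventually.of_forall fun x _ t _ => hd t x)
  · exact main.2
  · refine Filter.Eventually.of_forall fun x hx t ht => ?_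
    have h1 : t ∈ Icc (t₀ - 1) (t₀ + 1) := by
      have := Metric.mem_ball.1 ht
      rw [Real.dist_eq] at this
      constructor <;> [linarith [(abs_lt.1 this).1]; linarith [(abs_lt.1 this).2]]
    exact hM (t, x) ⟨h1, uIoc_subset_uIcc hx⟩

/-- The key little-o step: derivative of `t ↦ ∫ y in v t₀ .. v t, f t y`. -/
lemma hasDerivAt_sweep {f : ℝ → ℝ → ℝ} {v : ℝ → ℝ} {v' t₀ : ℝ}
    (hcf : Continuous (Function.uncurry f)) (hv : HasDerivAt v v' t₀) :
    HasDerivAt (fun t => ∫ y in (v t₀)..(v t), f t y) (v' * f t₀ (v t₀)) t₀ := by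
  have hcont : ∀ t, Continuous (f t) := fun t => hcf.comp (Continuous.prodMk_right t)
  set f₀ := f t₀ (v t₀) with hf₀
  rw [hasDerivAt_iff_isLittleO]
  have hsimp : ∀ t, (∫ y in (v t₀)..(v t), f t y) - (∫ y in (v t₀)..(v t₀), f t₀ y)
      - (t - t₀) • (v' * f₀)
      = ((∫ y in (v t₀)..(v t), f t y) - (v t - v t₀) * f₀)
        + f₀ * (v t - v t₀ - (t - t₀) • v') := by
    intro t
    rw [intervalIntegral.integral_same]
    simp only [smul_eq_mul]
    ring
  simp only [hsimp]
  refine IsLittleO.add ?_ ((hasDerivAt_iff_isLittleO.1 hv).const_mul_left f₀)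
  rw [isLittleO_iff]
  intro c hc
  have hB : ∀ᶠ t in nhds t₀, |v t - v t₀| ≤ (|v'| + 1) * |t - t₀| := by
    filter_upwards [(hasDerivAt_iff_isLittleO.1 hv).def one_pos] with t ht
    have h0 : |v t - v t₀ - (t - t₀) * v'| ≤ |t - t₀| := by
      simpa [Real.norm_eq_abs, smul_eq_mul] using ht
    calc |v t - v t₀| = |(v t - v t₀ - (t - t₀) * v') + (t - t₀) * v'| := by ring_nf
      _ ≤ |v t - v t₀ - (t - t₀) * v'| + |(t - t₀) * v'| := abs_add_le _ _
      _ ≤ |t - t₀| + |t - t₀| * |v'| := by rw [abs_mul]; gcongr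
      _ = (|v'| + 1) * |t - t₀| := by ring
  set c' := c / (|v'| + 1) with hc'
  have hc'pos : 0 < c' := div_pos hc (by positivity)
  obtain ⟨δ, hδpos, hδ⟩ := Metric.continuousAt_iff.1 hcf.continuousAt (c' / 2) (by positivity)
  have hev1 : ∀ᶠ t in nhds t₀, |v t - v t₀| < δ / 2 := by
    obtain ⟨δ', h1, h2⟩ := Metric.continuousAt_iff.1 hv.continuousAt (δ / 2) (by positivity)
    filter_upwards [Metric.ball_mem_nhds t₀ h1] with t ht
    have := h2 (Metric.mem_ball.1 ht)
    rwa [Real.dist_eq] at this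
  have hev2 : ∀ᶠ t in nhds t₀, |t - t₀| < δ / 2 := by
    filter_upwards [Metric.ball_mem_nhds t₀ (half_pos hδpos)] with t ht
    have := Metric.mem_ball.1 ht; rwa [Real.dist_eq] at this
  filter_upwards [hB, hev1, hev2] with t h1 h2 h3
  have key : ∀ y ∈ Set.uIoc (v t₀) (v t), ‖f t y - f₀‖ ≤ c' / 2 := by
    intro y hy
    have hy' : |y - v t₀| ≤ |v t - v t₀| := by
      rcases le_total (v t₀) (v t) with hle | hle
      · rw [uIoc_of_le hle] at hy
        rw [abs_of_nonneg (by linarith [hy.1.le]), abs_of_nonneg (by linarith)]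
        linarith [hy.2]
      · rw [uIoc_of_ge hle] at hy
        rw [abs_of_nonpos (by linarith [hy.2]), abs_of_nonpos (by linarith)]
        linarith [hy.1.le]
    have hdist : dist ((t, y) : ℝ × ℝ) (t₀, v t₀) < δ := by
      rw [Prod.dist_eq]
      apply max_lt <;> rw [Real.dist_eq]
      · linarith
      · calc |y - v t₀| ≤ |v t - v t₀| := hy'
          _ < δ / 2 := h2
          _ < δ := by linarith
    have := hδ hdist
    rw [Real.dist_eq] at this
    exact le_of_lt (by simpa [Function.uncurry, Real.norm_eq_abs, hf₀] using this)
  have hint : (∫ y in (v t₀)..(v t), f t y) - (v t - v t₀) * f₀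
      = ∫ y in (v t₀)..(v t), (f t y - f₀) := by
    rw [intervalIntegral.integral_sub ((hcont t).intervalIntegrable _ _)
      intervalIntegrable_const]
    simp [mul_comm]
  rw [hint]
  have hcc : c' * (|v'| + 1) = c := div_mul_cancel₀ c (by positivity)
  calc ‖∫ y in (v t₀)..(v t), (f t y - f₀)‖
      ≤ c' / 2 * |v t - v t₀| := intervalIntegral.norm_integral_le_of_norm_le_const key
    _ ≤ c' / 2 * ((|v'| + 1) * |t - t₀|) := by gcongr
    _ = (c' * (|v'| + 1)) * |t - t₀| / 2 := by ring
    _ = c * |t - t₀| / 2 := by rw [hcc]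
    _ ≤ c * ‖t - t₀‖ := by
        rw [Real.norm_eq_abs]
        nlinarith [abs_nonneg (t - t₀), hc.le]

/-- Differentiation under the integral sign with moving upper endpoint. -/
lemma hasDerivAt_param_integral_moving {f f' : ℝ → ℝ → ℝ} (c : ℝ) {v : ℝ → ℝ} {v' : ℝ}
    (t₀ : ℝ)
    (hcf : Continuous (Function.uncurry f)) (hcf' : Continuous (Function.uncurry f'))
    (hd : ∀ t x, HasDerivAt (fun s => f s x) (f' t x) t)
    (hv : HasDerivAt v v' t₀) :
    HasDerivAt (fun t => ∫ y in c..(v t), f t y)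
      (v' * f t₀ (v t₀) + ∫ y in c..(v t₀), f' t₀ y) t₀ := by
  have hcont : ∀ t, Continuous (f t) := fun t => hcf.comp (Continuous.prodMk_right t)
  have key : ∀ t, (∫ y in c..(v t), f t y)
      = (∫ y in c..(v t₀), f t y) + ∫ y in (v t₀)..(v t), f t y := by
    intro t
    rw [intervalIntegral.integral_add_adjacent_intervals
      ((hcont t).intervalIntegrable _ _) ((hcont t).intervalIntegrable _ _)]
  simp only [key]
  rw [add_comm]
  exact (hasDerivAt_param_integral c (v t₀) t₀ hcf hcf' hd).add (hasDerivAt_sweep hcf hv)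



/-- Divergence theorem on the subgraph `{0 ≤ x ≤ L, -hb ≤ y ≤ e x}`. -/
lemma green_subgraph {F₁ F₂ F₁x F₂y : ℝ → ℝ → ℝ} {e e' : ℝ → ℝ} (hb L : ℝ)
    (hc1 : Continuous (Function.uncurry F₁)) (hc2 : Continuous (Function.uncurry F₂))
    (hc1x : Continuous (Function.uncurry F₁x)) (hc2y : Continuous (Function.uncurry F₂y))
    (hdx : ∀ x y, HasDerivAt (fun x' => F₁ x' y) (F₁x x y) x)
    (hdy : ∀ x y, HasDerivAt (fun y' => F₂ x y') (F₂y x y) y)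
    (he : ∀ x, HasDerivAt e (e' x) x) (hce' : Continuous e') :
    (∫ x in (0:ℝ)..L, ∫ y in (-hb)..(e x), (F₁x x y + F₂y x y))
      = ((∫ x in (0:ℝ)..L, (F₂ x (e x) - F₂ x (-hb) - e' x * F₁ x (e x)))
          + (∫ y in (-hb)..(e L), F₁ L y)) - (∫ y in (-hb)..(e 0), F₁ 0 y) := by
  have hce : Continuous e := continuous_iff_continuousAt.2 fun x => (he x).continuousAt
  have hcF1 : ∀ x, Continuous (F₁ x) := fun x => hc1.comp (Continuous.prodMk_right x)
  have hcF1x : ∀ x, Continuous (F₁x x) := fun x => hc1x.comp (Continuous.prodMk_right x)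
  have hcF2y : ∀ x, Continuous (F₂y x) := fun x => hc2y.comp (Continuous.prodMk_right x)
  -- continuity of various x-functions
  have hcQx : Continuous (fun x => ∫ y in (-hb)..(e x), F₁x x y) :=
    intervalIntegral.continuous_parametric_intervalIntegral_of_continuous hc1x hce
  have hcS : Continuous (fun x => F₂ x (e x) - F₂ x (-hb)) :=
    (hc2.comp (continuous_id.prodMk hce)).sub (hc2.comp (continuous_id.prodMk continuous_const))
  have hcE : Continuous (fun x => e' x * F₁ x (e x)) :=
    hce'.mul (hc1.comp (continuous_id.prodMk hce))
  -- step 1: inner integral splits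
  have hinner : ∀ x, (∫ y in (-hb)..(e x), (F₁x x y + F₂y x y))
      = (∫ y in (-hb)..(e x), F₁x x y) + (F₂ x (e x) - F₂ x (-hb)) := by
    intro x
    rw [intervalIntegral.integral_add ((hcF1x x).intervalIntegrable _ _)
        ((hcF2y x).intervalIntegrable _ _),
      intervalIntegral.integral_eq_sub_of_hasDerivAt (fun y _ => hdy x y)
        ((hcF2y x).intervalIntegrable _ _)]
  rw [intervalIntegral.integral_congr (g := fun x =>
      (∫ y in (-hb)..(e x), F₁x x y) + (F₂ x (e x) - F₂ x (-hb))) (fun x _ => hinner x)]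
  rw [intervalIntegral.integral_add (hcQx.intervalIntegrable _ _) (hcS.intervalIntegrable _ _)]
  -- step 2: FTC in x for the moving primitive
  have hQ : ∀ x, HasDerivAt (fun x' => ∫ y in (-hb)..(e x'), F₁ x' y)
      (e' x * F₁ x (e x) + ∫ y in (-hb)..(e x), F₁x x y) x :=
    fun x => hasDerivAt_param_integral_moving (-hb) x hc1 hc1x hdx (he x)
  have hFTC1 : (∫ x in (0:ℝ)..L, (e' x * F₁ x (e x) + ∫ y in (-hb)..(e x), F₁x x y))
      = (∫ y in (-hb)..(e L), F₁ L y) - (∫ y in (-hb)..(e 0), F₁ 0 y) :=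
    intervalIntegral.integral_eq_sub_of_hasDerivAt (fun x _ => hQ x)
      ((hcE.add hcQx).intervalIntegrable _ _)
  rw [intervalIntegral.integral_add (hcE.intervalIntegrable _ _)
    (hcQx.intervalIntegrable _ _)] at hFTC1
  have hsplit : (∫ x in (0:ℝ)..L, (F₂ x (e x) - F₂ x (-hb) - e' x * F₁ x (e x)))
      = (∫ x in (0:ℝ)..L, (F₂ x (e x) - F₂ x (-hb))) - ∫ x in (0:ℝ)..L, e' x * F₁ x (e x) :=
    intervalIntegral.integral_sub (hcS.intervalIntegrable _ _) (hcE.intervalIntegrable _ _)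
  rw [hsplit]
  linarith [hFTC1]


end WW
namespace WW
/-! ### water-wave solution layer -/
section Sol
variable {η : ℝ → ℝ → ℝ} {ϕ : ℝ → ℝ → ℝ → ℝ}

lemma contDiff_psi (hη : ContDiff ℝ (⊤:ℕ∞) (Function.uncurry η))
    (hϕ : ContDiff ℝ (⊤:ℕ∞) (unc3 ϕ)) :
    ContDiff ℝ (⊤:ℕ∞) (Function.uncurry (psi η ϕ)) :=
  hϕ.comp (contDiff_fst.prodMk (contDiff_snd.prodMk hη))

lemma phiT_eq_fderiv (hϕ : ContDiff ℝ (⊤:ℕ∞) (unc3 ϕ)) (t x y : ℝ) :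
    phiT ϕ t x y = fderiv ℝ (unc3 ϕ) (t,x,y) (1,0,0) :=
  (hasDerivAt_curve hϕ (curve1 t x y)).deriv

lemma phiX_eq_fderiv (hϕ : ContDiff ℝ (⊤:ℕ∞) (unc3 ϕ)) (t x y : ℝ) :
    phiX ϕ t x y = fderiv ℝ (unc3 ϕ) (t,x,y) (0,1,0) :=
  (hasDerivAt_curve hϕ (curve2 t x y)).deriv

lemma phiY_eq_fderiv (hϕ : ContDiff ℝ (⊤:ℕ∞) (unc3 ϕ)) (t x y : ℝ) :
    phiY ϕ t x y = fderiv ℝ (unc3 ϕ) (t,x,y) (0,0,1) :=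
  (hasDerivAt_curve hϕ (curve3 t x y)).deriv

lemma fderiv3_split (hϕ : ContDiff ℝ (⊤:ℕ∞) (unc3 ϕ)) (q : ℝ×ℝ×ℝ) (a k : ℝ) :
    fderiv ℝ (unc3 ϕ) q (a, 0, k)
      = a * fderiv ℝ (unc3 ϕ) q (1,0,0) + k * fderiv ℝ (unc3 ϕ) q (0,0,1) := by
  have h : ((a, 0, k) : ℝ×ℝ×ℝ) = a • ((1:ℝ),(0:ℝ),(0:ℝ)) + k • ((0:ℝ),(0:ℝ),(1:ℝ)) := by
    simp [Prod.ext_iff]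
  rw [h, map_add, (fderiv ℝ (unc3 ϕ) q).map_smul, (fderiv ℝ (unc3 ϕ) q).map_smul,
    smul_eq_mul, smul_eq_mul]

lemma fderiv3_split2 (hϕ : ContDiff ℝ (⊤:ℕ∞) (unc3 ϕ)) (q : ℝ×ℝ×ℝ) (a k : ℝ) :
    fderiv ℝ (unc3 ϕ) q (0, a, k)
      = a * fderiv ℝ (unc3 ϕ) q (0,1,0) + k * fderiv ℝ (unc3 ϕ) q (0,0,1) := by
  have h : ((0, a, k) : ℝ×ℝ×ℝ) = a • ((0:ℝ),(1:ℝ),(0:ℝ)) + k • ((0:ℝ),(0:ℝ),(1:ℝ)) := by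
    simp [Prod.ext_iff]
  rw [h, map_add, (fderiv ℝ (unc3 ϕ) q).map_smul, (fderiv ℝ (unc3 ϕ) q).map_smul,
    smul_eq_mul, smul_eq_mul]

lemma psiT_eq (hη : ContDiff ℝ (⊤:ℕ∞) (Function.uncurry η))
    (hϕ : ContDiff ℝ (⊤:ℕ∞) (unc3 ϕ)) (t x : ℝ) :
    psiT η ϕ t x = phiT ϕ t x (η t x) + etaT η t x * phiY ϕ t x (η t x) := by
  have hc : HasDerivAt (fun s : ℝ => ((s, x, η s x) : ℝ×ℝ×ℝ))
      ((1:ℝ), (0:ℝ), etaT η t x) t :=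
    (hasDerivAt_id t).prodMk ((hasDerivAt_const t x).prodMk (hasDerivAt_p1 hη t x))
  have h := (hasDerivAt_curve hϕ hc).deriv
  show deriv (fun s => psi η ϕ s x) t = _
  rw [show (fun s => psi η ϕ s x) = (fun s => unc3 ϕ (s, x, η s x)) from rfl, h,
    fderiv3_split hϕ _ _ _, phiT_eq_fderiv hϕ, phiY_eq_fderiv hϕ, one_mul]

lemma psiX_eq (hη : ContDiff ℝ (⊤:ℕ∞) (Function.uncurry η))
    (hϕ : ContDiff ℝ (⊤:ℕ∞) (unc3 ϕ)) (t x : ℝ) :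
    psiX η ϕ t x = phiX ϕ t x (η t x) + etaX η t x * phiY ϕ t x (η t x) := by
  have hc : HasDerivAt (fun x' : ℝ => ((t, x', η t x') : ℝ×ℝ×ℝ))
      ((0:ℝ), (1:ℝ), etaX η t x) x :=
    (hasDerivAt_const x t).prodMk ((hasDerivAt_id x).prodMk (hasDerivAt_p2 hη t x))
  have h := (hasDerivAt_curve hϕ hc).deriv
  show deriv (fun x' => psi η ϕ t x') x = _
  rw [show (fun x' => psi η ϕ t x') = (fun x' => unc3 ϕ (t, x', η t x')) from rfl, h,
    fderiv3_split2 hϕ _ _ _, phiX_eq_fderiv hϕ, phiY_eq_fderiv hϕ, one_mul]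

end Sol
end WW
namespace WW
open intervalIntegral Filter
section Main
variable {L₁ h g T : ℝ} {η : ℝ → ℝ → ℝ} {ϕ : ℝ → ℝ → ℝ → ℝ}

lemma kinetic_flux (hsol : IsWW2D L₁ h g T η ϕ) (hL : 0 < L₁) (hh : 0 < h)
    {t : ℝ} (ht : t ∈ Icc (0:ℝ) T) :
    (∫ x in (0:ℝ)..L₁, ∫ y in (-h)..(η t x), ((phiX ϕ t x y)^2 + (phiY ϕ t x y)^2))
      = ∫ x in (0:ℝ)..L₁, etaT η t x * psi η ϕ t x := by
  have hη : ContDiff ℝ (⊤:ℕ∞) (Function.uncurry η) := hsol.smooth_eta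
  have hϕ : ContDiff ℝ (⊤:ℕ∞) (unc3 ϕ) := hsol.smooth_phi
  have cmk : Continuous (fun p : ℝ × ℝ => ((t, p.1, p.2) : ℝ×ℝ×ℝ)) :=
    continuous_const.prodMk continuous_id
  have cP : Continuous (fun p : ℝ×ℝ => ϕ t p.1 p.2) := hϕ.continuous.comp cmk
  have cX : Continuous (fun p : ℝ×ℝ => phiX ϕ t p.1 p.2) :=
    (contDiff_q2 (f := ϕ) hϕ).continuous.comp cmk
  have cY : Continuous (fun p : ℝ×ℝ => phiY ϕ t p.1 p.2) :=
    (contDiff_q3 (f := ϕ) hϕ).continuous.comp cmk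
  have cXX : Continuous (fun p : ℝ×ℝ => deriv (fun x' => phiX ϕ t x' p.2) p.1) :=
    (contDiff_q2 (f := phiX ϕ) (contDiff_q2 (f := ϕ) hϕ)).continuous.comp cmk
  have cYY : Continuous (fun p : ℝ×ℝ => deriv (fun y' => phiY ϕ t p.1 y') p.2) :=
    (contDiff_q3 (f := phiY ϕ) (contDiff_q3 (f := ϕ) hϕ)).continuous.comp cmk
  have cE' : Continuous (fun x => etaX η t x) :=
    (contDiff_p2 (f := η) hη).continuous.comp (Continuous.prodMk_right t)
  have hgr := green_subgraph (F₁ := fun x y => ϕ t x y * phiX ϕ t x y)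
      (F₂ := fun x y => ϕ t x y * phiY ϕ t x y)
      (F₁x := fun x y => phiX ϕ t x y * phiX ϕ t x y
        + ϕ t x y * deriv (fun x' => phiX ϕ t x' y) x)
      (F₂y := fun x y => phiY ϕ t x y * phiY ϕ t x y
        + ϕ t x y * deriv (fun y' => phiY ϕ t x y') y)
      (e := fun x => η t x) (e' := fun x => etaX η t x) h L₁
      (cP.mul cX) (cP.mul cY) ((cX.mul cX).add (cP.mul cXX)) ((cY.mul cY).add (cP.mul cYY))
      (fun x y => (hasDerivAt_q2 (f := ϕ) hϕ t x y).mul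
        (hasDerivAt_q2 (f := phiX ϕ) (contDiff_q2 (f := ϕ) hϕ) t x y))
      (fun x y => (hasDerivAt_q3 (f := ϕ) hϕ t x y).mul
        (hasDerivAt_q3 (f := phiY ϕ) (contDiff_q3 (f := ϕ) hϕ) t x y))
      (fun x => hasDerivAt_p2 (f := η) hη t x) cE'
  have hlow : ∀ x ∈ Icc (0:ℝ) L₁, -h ≤ η t x := fun x hx =>
    le_trans (by linarith) (hsol.eta_lower t ht x hx)
  have hA : (∫ x in (0:ℝ)..L₁, ∫ y in (-h)..(η t x),
      ((phiX ϕ t x y * phiX ϕ t x y + ϕ t x y * deriv (fun x' => phiX ϕ t x' y) x)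
        + (phiY ϕ t x y * phiY ϕ t x y + ϕ t x y * deriv (fun y' => phiY ϕ t x y') y)))
      = ∫ x in (0:ℝ)..L₁, ∫ y in (-h)..(η t x),
          ((phiX ϕ t x y)^2 + (phiY ϕ t x y)^2) := by
    refine intervalIntegral.integral_congr fun x hx => ?_
    rw [uIcc_of_le hL.le] at hx
    refine intervalIntegral.integral_congr fun y hy => ?_
    rw [uIcc_of_le (hlow x hx)] at hy
    have hlap := hsol.laplace t ht x hx y hy
    linear_combination (ϕ t x y) * hlap
  have hwallR : (∫ y in (-h)..(η t L₁), ϕ t L₁ y * phiX ϕ t L₁ y) = 0 := by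
    rw [intervalIntegral.integral_congr (g := fun _ => (0:ℝ)) fun y hy => ?_,
      intervalIntegral.integral_zero]
    rw [uIcc_of_le (hlow L₁ ⟨hL.le, le_refl _⟩)] at hy
    rw [hsol.bc_right t ht y hy, mul_zero]
  have hwallL : (∫ y in (-h)..(η t 0), ϕ t 0 y * phiX ϕ t 0 y) = 0 := by
    rw [intervalIntegral.integral_congr (g := fun _ => (0:ℝ)) fun y hy => ?_,
      intervalIntegral.integral_zero]
    rw [uIcc_of_le (hlow 0 ⟨le_refl _, hL.le⟩)] at hy
    rw [hsol.bc_left t ht y hy, mul_zero]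
  have hsurf : (∫ x in (0:ℝ)..L₁,
      (ϕ t x (η t x) * phiY ϕ t x (η t x) - ϕ t x (-h) * phiY ϕ t x (-h)
        - etaX η t x * (ϕ t x (η t x) * phiX ϕ t x (η t x))))
      = ∫ x in (0:ℝ)..L₁, etaT η t x * psi η ϕ t x := by
    refine intervalIntegral.integral_congr fun x hx => ?_
    rw [uIcc_of_le hL.le] at hx
    rw [hsol.bc_bottom t ht x hx, hsol.kinematic t ht x hx]
    show _ = (phiY ϕ t x (η t x) - etaX η t x * phiX ϕ t x (η t x)) * psi η ϕ t x
    simp only [psi]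
    ring
  rw [← hA, hgr, hwallR, hwallL, hsurf]
  ring
lemma hasDerivAt_congr_d {f : ℝ → ℝ} {a b x : ℝ} (hd : HasDerivAt f a x) (hab : a = b) :
    HasDerivAt f b x := hab ▸ hd

lemma pohozaev_green (hsol : IsWW2D L₁ h g T η ϕ) (hL : 0 < L₁) (hh : 0 < h)
    {t : ℝ} (ht : t ∈ Icc (0:ℝ) T) :
    (∫ x in (0:ℝ)..L₁,
        (x * (phiX ϕ t x (η t x) * phiY ϕ t x (η t x))
          + x * etaX η t x * ((phiY ϕ t x (η t x))^2 - (phiX ϕ t x (η t x))^2) / 2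
          + η t x * ((phiX ϕ t x (η t x))^2 - (phiY ϕ t x (η t x))^2) * (3/8)
          + η t x * etaX η t x * (phiX ϕ t x (η t x) * phiY ϕ t x (η t x)) * (3/4)))
      = L₁ / 2 * (∫ y in (-h)..(η t L₁), (phiY ϕ t L₁ y)^2)
        + 1/2 * (∫ x in (0:ℝ)..L₁, (h + 7/4 * η t x) * (phiX ϕ t x (-h))^2)
        - 7/4 * ∫ x in (0:ℝ)..L₁, ∫ y in (-h)..(η t x),
            etaX η t x * phiX ϕ t x y * phiY ϕ t x y := by
  have hη : ContDiff ℝ (⊤:ℕ∞) (Function.uncurry η) := hsol.smooth_eta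
  have hϕ : ContDiff ℝ (⊤:ℕ∞) (unc3 ϕ) := hsol.smooth_phi
  have cmk : Continuous (fun p : ℝ × ℝ => ((t, p.1, p.2) : ℝ×ℝ×ℝ)) :=
    continuous_const.prodMk continuous_id
  have cX : Continuous (fun p : ℝ×ℝ => phiX ϕ t p.1 p.2) :=
    (contDiff_q2 (f := ϕ) hϕ).continuous.comp cmk
  have cY : Continuous (fun p : ℝ×ℝ => phiY ϕ t p.1 p.2) :=
    (contDiff_q3 (f := ϕ) hϕ).continuous.comp cmk
  have cXX : Continuous (fun p : ℝ×ℝ => deriv (fun x' => phiX ϕ t x' p.2) p.1) :=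
    (contDiff_q2 (f := phiX ϕ) (contDiff_q2 (f := ϕ) hϕ)).continuous.comp cmk
  have cYX : Continuous (fun p : ℝ×ℝ => deriv (fun x' => phiY ϕ t x' p.2) p.1) :=
    (contDiff_q2 (f := phiY ϕ) (contDiff_q3 (f := ϕ) hϕ)).continuous.comp cmk
  have cXY : Continuous (fun p : ℝ×ℝ => deriv (fun y' => phiX ϕ t p.1 y') p.2) :=
    (contDiff_q3 (f := phiX ϕ) (contDiff_q2 (f := ϕ) hϕ)).continuous.comp cmk
  have cYY : Continuous (fun p : ℝ×ℝ => deriv (fun y' => phiY ϕ t p.1 y') p.2) :=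
    (contDiff_q3 (f := phiY ϕ) (contDiff_q3 (f := ϕ) hϕ)).continuous.comp cmk
  have cEta1 : Continuous (fun p : ℝ×ℝ => η t p.1) :=
    hη.continuous.comp (continuous_const.prodMk continuous_fst)
  have cEtaX1 : Continuous (fun p : ℝ×ℝ => etaX η t p.1) :=
    (contDiff_p2 (f := η) hη).continuous.comp (continuous_const.prodMk continuous_fst)
  have cE : Continuous (fun x => η t x) := hη.continuous.comp (Continuous.prodMk_right t)
  have cE' : Continuous (fun x => etaX η t x) :=
    (contDiff_p2 (f := η) hη).continuous.comp (Continuous.prodMk_right t)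
  have hlow : ∀ x ∈ Icc (0:ℝ) L₁, -h ≤ η t x := fun x hx =>
    le_trans (by linarith) (hsol.eta_lower t ht x hx)
  -- the two components of the vector field
  have hdx : ∀ x y, HasDerivAt (fun x' =>
      (x' * ((phiX ϕ t x' y)^2 - (phiY ϕ t x' y)^2) / 2
        + y * (phiX ϕ t x' y * phiY ϕ t x' y))
      - 7/4 * (η t x' * (phiX ϕ t x' y * phiY ϕ t x' y)))
      (((phiX ϕ t x y)^2 - (phiY ϕ t x y)^2) / 2
        + x * (phiX ϕ t x y * deriv (fun x' => phiX ϕ t x' y) x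
               - phiY ϕ t x y * deriv (fun x' => phiY ϕ t x' y) x)
        + y * (deriv (fun x' => phiX ϕ t x' y) x * phiY ϕ t x y
               + phiX ϕ t x y * deriv (fun x' => phiY ϕ t x' y) x)
        - 7/4 * (etaX η t x * (phiX ϕ t x y * phiY ϕ t x y)
               + η t x * (deriv (fun x' => phiX ϕ t x' y) x * phiY ϕ t x y
                  + phiX ϕ t x y * deriv (fun x' => phiY ϕ t x' y) x))) x := by
    intro x y
    have h1 : HasDerivAt (fun x' => phiX ϕ t x' y) (deriv (fun x' => phiX ϕ t x' y) x) x :=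
      hasDerivAt_q2 (f := phiX ϕ) (contDiff_q2 (f := ϕ) hϕ) t x y
    have h2 : HasDerivAt (fun x' => phiY ϕ t x' y) (deriv (fun x' => phiY ϕ t x' y) x) x :=
      hasDerivAt_q2 (f := phiY ϕ) (contDiff_q3 (f := ϕ) hϕ) t x y
    have h3 : HasDerivAt (fun x' => η t x') (etaX η t x) x := hasDerivAt_p2 (f := η) hη t x
    have H := ((((hasDerivAt_id x).fun_mul ((h1.fun_pow 2).fun_sub (h2.fun_pow 2))).div_const 2).fun_add
        ((h1.fun_mul h2).const_mul y)).fun_sub ((h3.fun_mul (h1.fun_mul h2)).const_mul (7/4))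
    refine hasDerivAt_congr_d H ?_
    simp only [id_eq]
    push_cast
    ring
  have hdy : ∀ x y, HasDerivAt (fun y' =>
      (x * (phiX ϕ t x y' * phiY ϕ t x y')
        + y' * ((phiY ϕ t x y')^2 - (phiX ϕ t x y')^2) / 2)
      - 7/4 * (η t x * (((phiY ϕ t x y')^2 - (phiX ϕ t x y')^2) / 2)))
      (x * (deriv (fun y' => phiX ϕ t x y') y * phiY ϕ t x y
            + phiX ϕ t x y * deriv (fun y' => phiY ϕ t x y') y)
        + ((phiY ϕ t x y)^2 - (phiX ϕ t x y)^2) / 2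
        + y * (phiY ϕ t x y * deriv (fun y' => phiY ϕ t x y') y
               - phiX ϕ t x y * deriv (fun y' => phiX ϕ t x y') y)
        - 7/4 * (η t x * (phiY ϕ t x y * deriv (fun y' => phiY ϕ t x y') y
               - phiX ϕ t x y * deriv (fun y' => phiX ϕ t x y') y))) y := by
    intro x y
    have h1 : HasDerivAt (fun y' => phiX ϕ t x y') (deriv (fun y' => phiX ϕ t x y') y) y :=
      hasDerivAt_q3 (f := phiX ϕ) (contDiff_q2 (f := ϕ) hϕ) t x y
    have h2 : HasDerivAt (fun y' => phiY ϕ t x y') (deriv (fun y' => phiY ϕ t x y') y) y :=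
      hasDerivAt_q3 (f := phiY ϕ) (contDiff_q3 (f := ϕ) hϕ) t x y
    have H := (((h1.fun_mul h2).const_mul x).fun_add
        (((hasDerivAt_id y).fun_mul ((h2.fun_pow 2).fun_sub (h1.fun_pow 2))).div_const 2)).fun_sub
        (((((h2.fun_pow 2).fun_sub (h1.fun_pow 2)).div_const 2).const_mul (η t x)).const_mul (7/4))
    refine hasDerivAt_congr_d H ?_
    simp only [id_eq]
    push_cast
    ring
  have hgr := green_subgraph
      (F₁ := fun x y => (x * ((phiX ϕ t x y)^2 - (phiY ϕ t x y)^2) / 2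
          + y * (phiX ϕ t x y * phiY ϕ t x y))
          - 7/4 * (η t x * (phiX ϕ t x y * phiY ϕ t x y)))
      (F₂ := fun x y => (x * (phiX ϕ t x y * phiY ϕ t x y)
          + y * ((phiY ϕ t x y)^2 - (phiX ϕ t x y)^2) / 2)
          - 7/4 * (η t x * (((phiY ϕ t x y)^2 - (phiX ϕ t x y)^2) / 2)))
      (F₁x := fun x y => ((phiX ϕ t x y)^2 - (phiY ϕ t x y)^2) / 2
        + x * (phiX ϕ t x y * deriv (fun x' => phiX ϕ t x' y) x
               - phiY ϕ t x y * deriv (fun x' => phiY ϕ t x' y) x)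
        + y * (deriv (fun x' => phiX ϕ t x' y) x * phiY ϕ t x y
               + phiX ϕ t x y * deriv (fun x' => phiY ϕ t x' y) x)
        - 7/4 * (etaX η t x * (phiX ϕ t x y * phiY ϕ t x y)
               + η t x * (deriv (fun x' => phiX ϕ t x' y) x * phiY ϕ t x y
                  + phiX ϕ t x y * deriv (fun x' => phiY ϕ t x' y) x)))
      (F₂y := fun x y => x * (deriv (fun y' => phiX ϕ t x y') y * phiY ϕ t x y
            + phiX ϕ t x y * deriv (fun y' => phiY ϕ t x y') y)
        + ((phiY ϕ t x y)^2 - (phiX ϕ t x y)^2) / 2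
        + y * (phiY ϕ t x y * deriv (fun y' => phiY ϕ t x y') y
               - phiX ϕ t x y * deriv (fun y' => phiX ϕ t x y') y)
        - 7/4 * (η t x * (phiY ϕ t x y * deriv (fun y' => phiY ϕ t x y') y
               - phiX ϕ t x y * deriv (fun y' => phiX ϕ t x y') y)))
      (e := fun x => η t x) (e' := fun x => etaX η t x) h L₁
      ((((continuous_fst.fun_mul ((cX.fun_pow 2).fun_sub (cY.fun_pow 2))).div_const 2).fun_add
          (continuous_snd.fun_mul (cX.fun_mul cY))).fun_sub
        (continuous_const.fun_mul (cEta1.fun_mul (cX.fun_mul cY))))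
      (((continuous_fst.fun_mul (cX.fun_mul cY)).fun_add
          ((continuous_snd.fun_mul ((cY.fun_pow 2).fun_sub (cX.fun_pow 2))).div_const 2)).fun_sub
        (continuous_const.fun_mul (cEta1.fun_mul (((cY.fun_pow 2).fun_sub (cX.fun_pow 2)).div_const 2))))
      (((((cX.fun_pow 2).fun_sub (cY.fun_pow 2)).div_const 2).fun_add
          (continuous_fst.fun_mul ((cX.fun_mul cXX).fun_sub (cY.fun_mul cYX)))
        |>.fun_add (continuous_snd.fun_mul ((cXX.fun_mul cY).fun_add (cX.fun_mul cYX)))).fun_sub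
        (continuous_const.fun_mul ((cEtaX1.fun_mul (cX.fun_mul cY)).fun_add
          (cEta1.fun_mul ((cXX.fun_mul cY).fun_add (cX.fun_mul cYX))))))
      (((continuous_fst.fun_mul ((cXY.fun_mul cY).fun_add (cX.fun_mul cYY))).fun_add
          ((((cY.fun_pow 2).fun_sub (cX.fun_pow 2)).div_const 2))
        |>.fun_add (continuous_snd.fun_mul ((cY.fun_mul cYY).fun_sub (cX.fun_mul cXY)))).fun_sub
        (continuous_const.fun_mul (cEta1.fun_mul ((cY.fun_mul cYY).fun_sub (cX.fun_mul cXY)))))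
      hdx hdy (fun x => hasDerivAt_p2 (f := η) hη t x) cE'
  -- (a) the bulk term
  have hbulk : (∫ x in (0:ℝ)..L₁, ∫ y in (-h)..(η t x),
      (((phiX ϕ t x y)^2 - (phiY ϕ t x y)^2) / 2
        + x * (phiX ϕ t x y * deriv (fun x' => phiX ϕ t x' y) x
               - phiY ϕ t x y * deriv (fun x' => phiY ϕ t x' y) x)
        + y * (deriv (fun x' => phiX ϕ t x' y) x * phiY ϕ t x y
               + phiX ϕ t x y * deriv (fun x' => phiY ϕ t x' y) x)
        - 7/4 * (etaX η t x * (phiX ϕ t x y * phiY ϕ t x y)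
               + η t x * (deriv (fun x' => phiX ϕ t x' y) x * phiY ϕ t x y
                  + phiX ϕ t x y * deriv (fun x' => phiY ϕ t x' y) x))
       + (x * (deriv (fun y' => phiX ϕ t x y') y * phiY ϕ t x y
            + phiX ϕ t x y * deriv (fun y' => phiY ϕ t x y') y)
        + ((phiY ϕ t x y)^2 - (phiX ϕ t x y)^2) / 2
        + y * (phiY ϕ t x y * deriv (fun y' => phiY ϕ t x y') y
               - phiX ϕ t x y * deriv (fun y' => phiX ϕ t x y') y)
        - 7/4 * (η t x * (phiY ϕ t x y * deriv (fun y' => phiY ϕ t x y') y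
               - phiX ϕ t x y * deriv (fun y' => phiX ϕ t x y') y)))))
      = -(7/4) * ∫ x in (0:ℝ)..L₁, ∫ y in (-h)..(η t x),
          etaX η t x * phiX ϕ t x y * phiY ϕ t x y := by
    rw [← intervalIntegral.integral_const_mul]
    refine intervalIntegral.integral_congr fun x hx => ?_
    rw [uIcc_of_le hL.le] at hx
    rw [← intervalIntegral.integral_const_mul]
    refine intervalIntegral.integral_congr fun y hy => ?_
    rw [uIcc_of_le (hlow x hx)] at hy
    have hlap := hsol.laplace t ht x hx y hy
    have hcl : deriv (fun y' => phiX ϕ t x y') y = deriv (fun x' => phiY ϕ t x' y) x :=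
      q_comm23 (f := ϕ) hϕ t x y
    linear_combination (x * phiX ϕ t x y + y * phiY ϕ t x y
        - 7/4 * (η t x * phiY ϕ t x y)) * hlap
      + (x * phiY ϕ t x y - y * phiX ϕ t x y + 7/4 * (η t x * phiX ϕ t x y)) * hcl
  -- (b) walls
  have hwallR : (∫ y in (-h)..(η t L₁),
      ((L₁ * ((phiX ϕ t L₁ y)^2 - (phiY ϕ t L₁ y)^2) / 2
          + y * (phiX ϕ t L₁ y * phiY ϕ t L₁ y))
          - 7/4 * (η t L₁ * (phiX ϕ t L₁ y * phiY ϕ t L₁ y))))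
      = -(L₁ / 2 * ∫ y in (-h)..(η t L₁), (phiY ϕ t L₁ y)^2) := by
    rw [← intervalIntegral.integral_const_mul, ← intervalIntegral.integral_neg]
    refine intervalIntegral.integral_congr fun y hy => ?_
    rw [uIcc_of_le (hlow L₁ ⟨hL.le, le_refl _⟩)] at hy
    rw [hsol.bc_right t ht y hy]
    ring
  have hwallL : (∫ y in (-h)..(η t 0),
      ((0 * ((phiX ϕ t 0 y)^2 - (phiY ϕ t 0 y)^2) / 2
          + y * (phiX ϕ t 0 y * phiY ϕ t 0 y))
          - 7/4 * (η t 0 * (phiX ϕ t 0 y * phiY ϕ t 0 y)))) = 0 := by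
    rw [intervalIntegral.integral_congr (g := fun _ => (0:ℝ)) fun y hy => ?_,
      intervalIntegral.integral_zero]
    rw [uIcc_of_le (hlow 0 ⟨le_refl _, hL.le⟩)] at hy
    rw [hsol.bc_left t ht y hy]
    ring
  -- (c) surface + bottom
  have csurf : Continuous (fun x : ℝ => ((t, x, η t x) : ℝ×ℝ×ℝ)) :=
    continuous_const.prodMk (continuous_id.prodMk cE)
  have cbot : Continuous (fun x : ℝ => ((t, x, -h) : ℝ×ℝ×ℝ)) :=
    continuous_const.prodMk (continuous_id.prodMk continuous_const)
  have cSX : Continuous (fun x => phiX ϕ t x (η t x)) :=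
    (contDiff_q2 (f := ϕ) hϕ).continuous.comp csurf
  have cSY : Continuous (fun x => phiY ϕ t x (η t x)) :=
    (contDiff_q3 (f := ϕ) hϕ).continuous.comp csurf
  have cBX : Continuous (fun x => phiX ϕ t x (-h)) :=
    (contDiff_q2 (f := ϕ) hϕ).continuous.comp cbot
  have hsurf : (∫ x in (0:ℝ)..L₁,
      (((x * (phiX ϕ t x (η t x) * phiY ϕ t x (η t x))
          + η t x * ((phiY ϕ t x (η t x))^2 - (phiX ϕ t x (η t x))^2) / 2)
          - 7/4 * (η t x * (((phiY ϕ t x (η t x))^2 - (phiX ϕ t x (η t x))^2) / 2)))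
        - ((x * (phiX ϕ t x (-h) * phiY ϕ t x (-h))
          + (-h) * ((phiY ϕ t x (-h))^2 - (phiX ϕ t x (-h))^2) / 2)
          - 7/4 * (η t x * (((phiY ϕ t x (-h))^2 - (phiX ϕ t x (-h))^2) / 2)))
        - etaX η t x * ((x * ((phiX ϕ t x (η t x))^2 - (phiY ϕ t x (η t x))^2) / 2
          + η t x * (phiX ϕ t x (η t x) * phiY ϕ t x (η t x)))
          - 7/4 * (η t x * (phiX ϕ t x (η t x) * phiY ϕ t x (η t x))))))
      = (∫ x in (0:ℝ)..L₁,
          (x * (phiX ϕ t x (η t x) * phiY ϕ t x (η t x))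
            + x * etaX η t x * ((phiY ϕ t x (η t x))^2 - (phiX ϕ t x (η t x))^2) / 2
            + η t x * ((phiX ϕ t x (η t x))^2 - (phiY ϕ t x (η t x))^2) * (3/8)
            + η t x * etaX η t x * (phiX ϕ t x (η t x) * phiY ϕ t x (η t x)) * (3/4)))
        - 1/2 * (∫ x in (0:ℝ)..L₁, (h + 7/4 * η t x) * (phiX ϕ t x (-h))^2) := by
    rw [← intervalIntegral.integral_const_mul, ← intervalIntegral.integral_sub]
    · refine intervalIntegral.integral_congr fun x hx => ?_
      rw [uIcc_of_le hL.le] at hx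
      rw [hsol.bc_bottom t ht x hx]
      ring
    · exact (((continuous_id.mul (cSX.mul cSY)).add
        (((continuous_id.mul cE').mul ((cSY.pow 2).sub (cSX.pow 2))).div_const 2)).add
        ((cE.mul ((cSX.pow 2).sub (cSY.pow 2))).mul continuous_const)).add
        (((cE.mul cE').mul (cSX.mul cSY)).mul continuous_const) |>.intervalIntegrable _ _
    · exact (continuous_const.mul ((continuous_const.add
        (continuous_const.mul cE)).mul (cBX.pow 2))).intervalIntegrable _ _
  rw [hbulk, hwallR, hwallL, hsurf] at hgr
  linarith [hgr]

/-- the time derivative of the energy, raw form -/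
lemma energy_deriv (hsol : IsWW2D L₁ h g T η ϕ) (t : ℝ) :
    HasDerivAt (energy2D L₁ h g η ϕ)
      (g / 2 * (∫ x in (0:ℝ)..L₁, 2 * η t x * etaT η t x)
        + 1 / 2 * (∫ x in (0:ℝ)..L₁,
            (etaT η t x * ((phiX ϕ t x (η t x))^2 + (phiY ϕ t x (η t x))^2)
              + ∫ y in (-h)..(η t x),
                  2 * (phiX ϕ t x y * deriv (fun s => phiX ϕ s x y) t
                    + phiY ϕ t x y * deriv (fun s => phiY ϕ s x y) t)))) t := by
  have hη : ContDiff ℝ (⊤:ℕ∞) (Function.uncurry η) := hsol.smooth_eta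
  have hϕ : ContDiff ℝ (⊤:ℕ∞) (unc3 ϕ) := hsol.smooth_phi
  have cEta : Continuous (Function.uncurry η) := hη.continuous
  have cEtaT : Continuous (fun p : ℝ×ℝ => etaT η p.1 p.2) := (contDiff_p1 (f := η) hη).continuous
  have cuX : Continuous (unc3 (phiX ϕ)) := (contDiff_q2 (f := ϕ) hϕ).continuous
  have cuY : Continuous (unc3 (phiY ϕ)) := (contDiff_q3 (f := ϕ) hϕ).continuous
  have cuXT : Continuous (unc3 (fun t x y => deriv (fun s => phiX ϕ s x y) t)) :=
    (contDiff_q1 (f := phiX ϕ) (contDiff_q2 (f := ϕ) hϕ)).continuous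
  have cuYT : Continuous (unc3 (fun t x y => deriv (fun s => phiY ϕ s x y) t)) :=
    (contDiff_q1 (f := phiY ϕ) (contDiff_q3 (f := ϕ) hϕ)).continuous
  -- joint continuity of the integrands, as functions of ((t,x), y)
  have cmk2 : Continuous (fun q : (ℝ×ℝ)×ℝ => ((q.1.1, q.1.2, q.2) : ℝ×ℝ×ℝ)) :=
    (continuous_fst.comp continuous_fst).prodMk
      ((continuous_snd.comp continuous_fst).prodMk continuous_snd)
  have cW2j : Continuous (Function.uncurry
      (fun p : ℝ×ℝ => fun y => (phiX ϕ p.1 p.2 y)^2 + (phiY ϕ p.1 p.2 y)^2)) :=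
    ((cuX.comp cmk2).pow 2).add ((cuY.comp cmk2).pow 2)
  have cdW2j : Continuous (Function.uncurry
      (fun p : ℝ×ℝ => fun y => 2 * (phiX ϕ p.1 p.2 y * deriv (fun s => phiX ϕ s p.2 y) p.1
        + phiY ϕ p.1 p.2 y * deriv (fun s => phiY ϕ s p.2 y) p.1))) :=
    continuous_const.mul (((cuX.comp cmk2).mul (cuXT.comp cmk2)).add
      ((cuY.comp cmk2).mul (cuYT.comp cmk2)))
  -- derivative of the first (quadratic) part
  have h1 : HasDerivAt (fun t => ∫ x in (0:ℝ)..L₁, (η t x)^2)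
      (∫ x in (0:ℝ)..L₁, 2 * η t x * etaT η t x) t := by
    refine hasDerivAt_param_integral (f := fun t x => (η t x)^2)
      (f' := fun t x => 2 * η t x * etaT η t x) 0 L₁ t
      (by exact (cEta.pow 2)) (by exact (continuous_const.mul cEta).mul cEtaT) (fun t x => ?_)
    have hp : HasDerivAt (fun s => η s x) (etaT η t x) t := hasDerivAt_p1 (f := η) hη t x
    refine hasDerivAt_congr_d (hp.pow 2) ?_
    push_cast; ring
  -- derivative of the kinetic part
  have h2 : HasDerivAt (fun t => ∫ x in (0:ℝ)..L₁, ∫ y in (-h)..(η t x),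
        ((phiX ϕ t x y)^2 + (phiY ϕ t x y)^2))
      (∫ x in (0:ℝ)..L₁,
        (etaT η t x * ((phiX ϕ t x (η t x))^2 + (phiY ϕ t x (η t x))^2)
          + ∫ y in (-h)..(η t x),
              2 * (phiX ϕ t x y * deriv (fun s => phiX ϕ s x y) t
                + phiY ϕ t x y * deriv (fun s => phiY ϕ s x y) t))) t := by
    refine hasDerivAt_param_integral
      (f := fun t x => ∫ y in (-h)..(η t x), ((phiX ϕ t x y)^2 + (phiY ϕ t x y)^2))
      (f' := fun t x => etaT η t x * ((phiX ϕ t x (η t x))^2 + (phiY ϕ t x (η t x))^2)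
        + ∫ y in (-h)..(η t x),
            2 * (phiX ϕ t x y * deriv (fun s => phiX ϕ s x y) t
              + phiY ϕ t x y * deriv (fun s => phiY ϕ s x y) t))
      0 L₁ t ?_ ?_ (fun t x => ?_)
    · exact intervalIntegral.continuous_parametric_intervalIntegral_of_continuous
        (f := fun p : ℝ×ℝ => fun y => (phiX ϕ p.1 p.2 y)^2 + (phiY ϕ p.1 p.2 y)^2)
        cW2j cEta
    · have cmkS2 : Continuous (fun p : ℝ×ℝ => ((p.1, p.2, η p.1 p.2) : ℝ×ℝ×ℝ)) :=
        continuous_fst.prodMk (continuous_snd.prodMk cEta)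
      exact ((cEtaT.mul ((((cuX.comp cmkS2)).pow 2).add ((cuY.comp cmkS2).pow 2)))).add
        (intervalIntegral.continuous_parametric_intervalIntegral_of_continuous
          (f := fun p : ℝ×ℝ => fun y =>
            2 * (phiX ϕ p.1 p.2 y * deriv (fun s => phiX ϕ s p.2 y) p.1
              + phiY ϕ p.1 p.2 y * deriv (fun s => phiY ϕ s p.2 y) p.1))
          cdW2j cEta)
    · refine hasDerivAt_param_integral_moving (f := fun s y =>
          (phiX ϕ s x y)^2 + (phiY ϕ s x y)^2)
        (f' := fun s y => 2 * (phiX ϕ s x y * deriv (fun s' => phiX ϕ s' x y) s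
          + phiY ϕ s x y * deriv (fun s' => phiY ϕ s' x y) s))
        (-h) t ?_ ?_ (fun s y => ?_) (hasDerivAt_p1 (f := η) hη t x)
      · have cmk1 : Continuous (fun q : ℝ×ℝ => ((q.1, x, q.2) : ℝ×ℝ×ℝ)) :=
          continuous_fst.prodMk (continuous_const.prodMk continuous_snd)
        exact ((cuX.comp cmk1).pow 2).add ((cuY.comp cmk1).pow 2)
      · have cmk1 : Continuous (fun q : ℝ×ℝ => ((q.1, x, q.2) : ℝ×ℝ×ℝ)) :=
          continuous_fst.prodMk (continuous_const.prodMk continuous_snd)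
        exact continuous_const.mul (((cuX.comp cmk1).mul (cuXT.comp cmk1)).add
          ((cuY.comp cmk1).mul (cuYT.comp cmk1)))
      · have hX : HasDerivAt (fun s' => phiX ϕ s' x y)
            (deriv (fun s' => phiX ϕ s' x y) s) s :=
          hasDerivAt_q1 (f := phiX ϕ) (contDiff_q2 (f := ϕ) hϕ) s x y
        have hY : HasDerivAt (fun s' => phiY ϕ s' x y)
            (deriv (fun s' => phiY ϕ s' x y) s) s :=
          hasDerivAt_q1 (f := phiY ϕ) (contDiff_q3 (f := ϕ) hϕ) s x y
        refine hasDerivAt_congr_d ((hX.pow 2).add (hY.pow 2)) ?_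
        push_cast; ring
  exact (h1.const_mul (g / 2)).add (h2.const_mul (1 / 2))

/-- on `[0,T]` the raw derivative of the energy vanishes -/
lemma energy_deriv_zero (hsol : IsWW2D L₁ h g T η ϕ) (hL : 0 < L₁) (hh : 0 < h)
    {t : ℝ} (ht : t ∈ Icc (0:ℝ) T) :
    (g / 2 * (∫ x in (0:ℝ)..L₁, 2 * η t x * etaT η t x)
        + 1 / 2 * (∫ x in (0:ℝ)..L₁,
            (etaT η t x * ((phiX ϕ t x (η t x))^2 + (phiY ϕ t x (η t x))^2)
              + ∫ y in (-h)..(η t x),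
                  2 * (phiX ϕ t x y * deriv (fun s => phiX ϕ s x y) t
                    + phiY ϕ t x y * deriv (fun s => phiY ϕ s x y) t)))) = 0 := by
  have hη : ContDiff ℝ (⊤:ℕ∞) (Function.uncurry η) := hsol.smooth_eta
  have hϕ : ContDiff ℝ (⊤:ℕ∞) (unc3 ϕ) := hsol.smooth_phi
  have hlow : ∀ x ∈ Icc (0:ℝ) L₁, -h ≤ η t x := fun x hx =>
    le_trans (by linarith) (hsol.eta_lower t ht x hx)
  have cmk : Continuous (fun p : ℝ × ℝ => ((t, p.1, p.2) : ℝ×ℝ×ℝ)) :=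
    continuous_const.prodMk continuous_id
  have cX : Continuous (fun p : ℝ×ℝ => phiX ϕ t p.1 p.2) :=
    (contDiff_q2 (f := ϕ) hϕ).continuous.comp cmk
  have cY : Continuous (fun p : ℝ×ℝ => phiY ϕ t p.1 p.2) :=
    (contDiff_q3 (f := ϕ) hϕ).continuous.comp cmk
  have cT : Continuous (fun p : ℝ×ℝ => phiT ϕ t p.1 p.2) :=
    (contDiff_q1 (f := ϕ) hϕ).continuous.comp cmk
  have cTX : Continuous (fun p : ℝ×ℝ => deriv (fun x' => phiT ϕ t x' p.2) p.1) :=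
    (contDiff_q2 (f := phiT ϕ) (contDiff_q1 (f := ϕ) hϕ)).continuous.comp cmk
  have cTY : Continuous (fun p : ℝ×ℝ => deriv (fun y' => phiT ϕ t p.1 y') p.2) :=
    (contDiff_q3 (f := phiT ϕ) (contDiff_q1 (f := ϕ) hϕ)).continuous.comp cmk
  have cXX : Continuous (fun p : ℝ×ℝ => deriv (fun x' => phiX ϕ t x' p.2) p.1) :=
    (contDiff_q2 (f := phiX ϕ) (contDiff_q2 (f := ϕ) hϕ)).continuous.comp cmk
  have cYY : Continuous (fun p : ℝ×ℝ => deriv (fun y' => phiY ϕ t p.1 y') p.2) :=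
    (contDiff_q3 (f := phiY ϕ) (contDiff_q3 (f := ϕ) hϕ)).continuous.comp cmk
  have cE : Continuous (fun x => η t x) := hη.continuous.comp (Continuous.prodMk_right t)
  have cE' : Continuous (fun x => etaX η t x) :=
    (contDiff_p2 (f := η) hη).continuous.comp (Continuous.prodMk_right t)
  -- Green identity with the field  phiT ∇ϕ
  have hgr := green_subgraph (F₁ := fun x y => phiT ϕ t x y * phiX ϕ t x y)
      (F₂ := fun x y => phiT ϕ t x y * phiY ϕ t x y)
      (F₁x := fun x y => deriv (fun x' => phiT ϕ t x' y) x * phiX ϕ t x y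
        + phiT ϕ t x y * deriv (fun x' => phiX ϕ t x' y) x)
      (F₂y := fun x y => deriv (fun y' => phiT ϕ t x y') y * phiY ϕ t x y
        + phiT ϕ t x y * deriv (fun y' => phiY ϕ t x y') y)
      (e := fun x => η t x) (e' := fun x => etaX η t x) h L₁
      (cT.mul cX) (cT.mul cY) ((cTX.mul cX).add (cT.mul cXX)) ((cTY.mul cY).add (cT.mul cYY))
      (fun x y => (hasDerivAt_q2 (f := phiT ϕ) (contDiff_q1 (f := ϕ) hϕ) t x y).mul
        (hasDerivAt_q2 (f := phiX ϕ) (contDiff_q2 (f := ϕ) hϕ) t x y))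
      (fun x y => (hasDerivAt_q3 (f := phiT ϕ) (contDiff_q1 (f := ϕ) hϕ) t x y).mul
        (hasDerivAt_q3 (f := phiY ϕ) (contDiff_q3 (f := ϕ) hϕ) t x y))
      (fun x => hasDerivAt_p2 (f := η) hη t x) cE'
  -- bulk: the integrand of the kinetic derivative equals twice the Green integrand
  have hbulk : (∫ x in (0:ℝ)..L₁, ∫ y in (-h)..(η t x),
      2 * (phiX ϕ t x y * deriv (fun s => phiX ϕ s x y) t
        + phiY ϕ t x y * deriv (fun s => phiY ϕ s x y) t))
      = 2 * ∫ x in (0:ℝ)..L₁, ∫ y in (-h)..(η t x),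
          (deriv (fun x' => phiT ϕ t x' y) x * phiX ϕ t x y
            + phiT ϕ t x y * deriv (fun x' => phiX ϕ t x' y) x
          + (deriv (fun y' => phiT ϕ t x y') y * phiY ϕ t x y
            + phiT ϕ t x y * deriv (fun y' => phiY ϕ t x y') y)) := by
    rw [← intervalIntegral.integral_const_mul]
    refine intervalIntegral.integral_congr fun x hx => ?_
    rw [uIcc_of_le hL.le] at hx
    rw [← intervalIntegral.integral_const_mul]
    refine intervalIntegral.integral_congr fun y hy => ?_
    rw [uIcc_of_le (hlow x hx)] at hy
    have hlap := hsol.laplace t ht x hx y hy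
    have hc12 : deriv (fun s => phiX ϕ s x y) t = deriv (fun x' => phiT ϕ t x' y) x :=
      q_comm12 (f := ϕ) hϕ t x y
    have hc13 : deriv (fun s => phiY ϕ s x y) t = deriv (fun y' => phiT ϕ t x y') y :=
      q_comm13 (f := ϕ) hϕ t x y
    rw [hc12, hc13]
    linear_combination (-2 * phiT ϕ t x y) * hlap
  -- boundary terms of the Green identity
  have hwallR : (∫ y in (-h)..(η t L₁), phiT ϕ t L₁ y * phiX ϕ t L₁ y) = 0 := by
    rw [intervalIntegral.integral_congr (g := fun _ => (0:ℝ)) fun y hy => ?_,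
      intervalIntegral.integral_zero]
    rw [uIcc_of_le (hlow L₁ ⟨hL.le, le_refl _⟩)] at hy
    rw [hsol.bc_right t ht y hy, mul_zero]
  have hwallL : (∫ y in (-h)..(η t 0), phiT ϕ t 0 y * phiX ϕ t 0 y) = 0 := by
    rw [intervalIntegral.integral_congr (g := fun _ => (0:ℝ)) fun y hy => ?_,
      intervalIntegral.integral_zero]
    rw [uIcc_of_le (hlow 0 ⟨le_refl _, hL.le⟩)] at hy
    rw [hsol.bc_left t ht y hy, mul_zero]
  have hsurf : (∫ x in (0:ℝ)..L₁,
      (phiT ϕ t x (η t x) * phiY ϕ t x (η t x) - phiT ϕ t x (-h) * phiY ϕ t x (-h)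
        - etaX η t x * (phiT ϕ t x (η t x) * phiX ϕ t x (η t x))))
      = ∫ x in (0:ℝ)..L₁, etaT η t x * phiT ϕ t x (η t x) := by
    refine intervalIntegral.integral_congr fun x hx => ?_
    rw [uIcc_of_le hL.le] at hx
    rw [hsol.bc_bottom t ht x hx, hsol.kinematic t ht x hx]
    ring
  -- more continuity
  have cE : Continuous (fun x => η t x) := cE
  have cXT : Continuous (fun p : ℝ×ℝ => deriv (fun s => phiX ϕ s p.1 p.2) t) :=
    (contDiff_q1 (f := phiX ϕ) (contDiff_q2 (f := ϕ) hϕ)).continuous.comp cmk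
  have cYT : Continuous (fun p : ℝ×ℝ => deriv (fun s => phiY ϕ s p.1 p.2) t) :=
    (contDiff_q1 (f := phiY ϕ) (contDiff_q3 (f := ϕ) hϕ)).continuous.comp cmk
  have cmkS : Continuous (fun x : ℝ => ((t, x, η t x) : ℝ×ℝ×ℝ)) :=
    continuous_const.prodMk (continuous_id.prodMk cE)
  have cSX : Continuous (fun x => phiX ϕ t x (η t x)) :=
    (contDiff_q2 (f := ϕ) hϕ).continuous.comp cmkS
  have cSY : Continuous (fun x => phiY ϕ t x (η t x)) :=
    (contDiff_q3 (f := ϕ) hϕ).continuous.comp cmkS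
  have cST : Continuous (fun x => phiT ϕ t x (η t x)) :=
    (contDiff_q1 (f := ϕ) hϕ).continuous.comp cmkS
  have cETx : Continuous (fun x => etaT η t x) :=
    (contDiff_p1 (f := η) hη).continuous.comp (Continuous.prodMk_right t)
  have cEx : Continuous (fun x => η t x) := cE
  have cIB : Continuous (fun x => ∫ y in (-h)..(η t x),
      2 * (phiX ϕ t x y * deriv (fun s => phiX ϕ s x y) t
        + phiY ϕ t x y * deriv (fun s => phiY ϕ s x y) t)) := by
    refine intervalIntegral.continuous_parametric_intervalIntegral_of_continuous ?_ cE
    exact continuous_const.mul ((cX.mul cXT).add (cY.mul cYT))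
  have hsplitA : (∫ x in (0:ℝ)..L₁,
      (etaT η t x * ((phiX ϕ t x (η t x))^2 + (phiY ϕ t x (η t x))^2)
        + ∫ y in (-h)..(η t x),
            2 * (phiX ϕ t x y * deriv (fun s => phiX ϕ s x y) t
              + phiY ϕ t x y * deriv (fun s => phiY ϕ s x y) t)))
      = (∫ x in (0:ℝ)..L₁, etaT η t x * ((phiX ϕ t x (η t x))^2 + (phiY ϕ t x (η t x))^2))
        + ∫ x in (0:ℝ)..L₁, ∫ y in (-h)..(η t x),
            2 * (phiX ϕ t x y * deriv (fun s => phiX ϕ s x y) t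
              + phiY ϕ t x y * deriv (fun s => phiY ϕ s x y) t) :=
    intervalIntegral.integral_add
      ((cETx.mul ((cSX.pow 2).add (cSY.pow 2))).intervalIntegrable _ _)
      (cIB.intervalIntegrable _ _)
  rw [hsplitA, hbulk, hgr, hwallR, hwallL, hsurf]
  -- Bernoulli kills everything
  have key : (∫ x in (0:ℝ)..L₁, etaT η t x * (g * η t x
      + 1 / 2 * ((phiX ϕ t x (η t x))^2 + (phiY ϕ t x (η t x))^2)
      + phiT ϕ t x (η t x))) = 0 := by
    rw [intervalIntegral.integral_congr (g := fun _ => (0:ℝ)) fun x hx => ?_,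
      intervalIntegral.integral_zero]
    rw [uIcc_of_le hL.le] at hx
    have hb := hsol.bernoulli t ht x hx
    linear_combination etaT η t x * hb
  have keysplit : (∫ x in (0:ℝ)..L₁, etaT η t x * (g * η t x
      + 1 / 2 * ((phiX ϕ t x (η t x))^2 + (phiY ϕ t x (η t x))^2)
      + phiT ϕ t x (η t x)))
      = g * (∫ x in (0:ℝ)..L₁, η t x * etaT η t x)
        + (1 / 2 * (∫ x in (0:ℝ)..L₁,
            etaT η t x * ((phiX ϕ t x (η t x))^2 + (phiY ϕ t x (η t x))^2))
          + ∫ x in (0:ℝ)..L₁, etaT η t x * phiT ϕ t x (η t x)) := by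
    rw [← intervalIntegral.integral_const_mul, ← intervalIntegral.integral_const_mul,
      ← intervalIntegral.integral_add ((continuous_const.fun_mul
        (cETx.fun_mul ((cSX.fun_pow 2).fun_add (cSY.fun_pow 2)))).intervalIntegrable _ _)
        ((cETx.fun_mul cST).intervalIntegrable _ _),
      ← intervalIntegral.integral_add ((continuous_const.fun_mul
        (cEx.fun_mul cETx)).intervalIntegrable _ _) ?_]
    · exact intervalIntegral.integral_congr fun x _ => by ring
    · exact ((continuous_const.mul (cETx.mul ((cSX.pow 2).add (cSY.pow 2)))).add
        (cETx.mul cST)).intervalIntegrable _ _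
  have h2eta : (∫ x in (0:ℝ)..L₁, 2 * η t x * etaT η t x)
      = 2 * ∫ x in (0:ℝ)..L₁, η t x * etaT η t x := by
    rw [← intervalIntegral.integral_const_mul]
    exact intervalIntegral.integral_congr fun x _ => by ring
  rw [h2eta]
  rw [keysplit] at key
  linarith [key]

/-- the energy is constant on `[0, T]` -/
lemma energy_const (hsol : IsWW2D L₁ h g T η ϕ) (hL : 0 < L₁) (hh : 0 < h)
    {t : ℝ} (ht : t ∈ Icc (0:ℝ) T) :
    energy2D L₁ h g η ϕ t = energy2D L₁ h g η ϕ 0 := by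
  have hη : ContDiff ℝ (⊤:ℕ∞) (Function.uncurry η) := hsol.smooth_eta
  have hϕ : ContDiff ℝ (⊤:ℕ∞) (unc3 ϕ) := hsol.smooth_phi
  have cEta : Continuous (Function.uncurry η) := hη.continuous
  have cEtaT : Continuous (fun p : ℝ×ℝ => etaT η p.1 p.2) := (contDiff_p1 (f := η) hη).continuous
  have cuX : Continuous (unc3 (phiX ϕ)) := (contDiff_q2 (f := ϕ) hϕ).continuous
  have cuY : Continuous (unc3 (phiY ϕ)) := (contDiff_q3 (f := ϕ) hϕ).continuous
  have cuXT : Continuous (unc3 (fun t x y => deriv (fun s => phiX ϕ s x y) t)) :=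
    (contDiff_q1 (f := phiX ϕ) (contDiff_q2 (f := ϕ) hϕ)).continuous
  have cuYT : Continuous (unc3 (fun t x y => deriv (fun s => phiY ϕ s x y) t)) :=
    (contDiff_q1 (f := phiY ϕ) (contDiff_q3 (f := ϕ) hϕ)).continuous
  have cmk2 : Continuous (fun q : (ℝ×ℝ)×ℝ => ((q.1.1, q.1.2, q.2) : ℝ×ℝ×ℝ)) :=
    (continuous_fst.comp continuous_fst).prodMk
      ((continuous_snd.comp continuous_fst).prodMk continuous_snd)
  have cmkSunc : Continuous (fun p : ℝ×ℝ => ((p.1, p.2, η p.1 p.2) : ℝ×ℝ×ℝ)) :=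
    continuous_fst.prodMk (continuous_snd.prodMk cEta)
  -- continuity of the raw energy derivative as a function of t
  have cD : Continuous (fun t => g / 2 * (∫ x in (0:ℝ)..L₁, 2 * η t x * etaT η t x)
      + 1 / 2 * (∫ x in (0:ℝ)..L₁,
          (etaT η t x * ((phiX ϕ t x (η t x))^2 + (phiY ϕ t x (η t x))^2)
            + ∫ y in (-h)..(η t x),
                2 * (phiX ϕ t x y * deriv (fun s => phiX ϕ s x y) t
                  + phiY ϕ t x y * deriv (fun s => phiY ϕ s x y) t)))) := by
    refine (continuous_const.mul ?_).add (continuous_const.mul ?_)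
    · refine intervalIntegral.continuous_parametric_intervalIntegral_of_continuous'
        (f := fun t x => 2 * η t x * etaT η t x) ?_ 0 L₁
      exact (continuous_const.mul cEta).mul cEtaT
    · refine intervalIntegral.continuous_parametric_intervalIntegral_of_continuous'
        (f := fun t x => etaT η t x * ((phiX ϕ t x (η t x))^2 + (phiY ϕ t x (η t x))^2)
          + ∫ y in (-h)..(η t x),
              2 * (phiX ϕ t x y * deriv (fun s => phiX ϕ s x y) t
                + phiY ϕ t x y * deriv (fun s => phiY ϕ s x y) t)) ?_ 0 L₁
      refine (cEtaT.mul (((cuX.comp cmkSunc).pow 2).add ((cuY.comp cmkSunc).pow 2))).add ?_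
      refine intervalIntegral.continuous_parametric_intervalIntegral_of_continuous
        (f := fun p : ℝ×ℝ => fun y =>
          2 * (phiX ϕ p.1 p.2 y * deriv (fun s => phiX ϕ s p.2 y) p.1
            + phiY ϕ p.1 p.2 y * deriv (fun s => phiY ϕ s p.2 y) p.1)) ?_ cEta
      exact continuous_const.mul (((cuX.comp cmk2).mul (cuXT.comp cmk2)).add
        ((cuY.comp cmk2).mul (cuYT.comp cmk2)))
  have hFTC : ∫ s in (0:ℝ)..t, (g / 2 * (∫ x in (0:ℝ)..L₁, 2 * η s x * etaT η s x)
      + 1 / 2 * (∫ x in (0:ℝ)..L₁,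
          (etaT η s x * ((phiX ϕ s x (η s x))^2 + (phiY ϕ s x (η s x))^2)
            + ∫ y in (-h)..(η s x),
                2 * (phiX ϕ s x y * deriv (fun s' => phiX ϕ s' x y) s
                  + phiY ϕ s x y * deriv (fun s' => phiY ϕ s' x y) s))))
      = energy2D L₁ h g η ϕ t - energy2D L₁ h g η ϕ 0 :=
    intervalIntegral.integral_eq_sub_of_hasDerivAt (fun s _ => energy_deriv hsol s)
      (cD.intervalIntegrable _ _)
  rw [intervalIntegral.integral_congr (g := fun _ => (0:ℝ)) fun s hs => ?_,
    intervalIntegral.integral_zero] at hFTC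
  · linarith [hFTC]
  · rw [uIcc_of_le ht.1] at hs
    exact energy_deriv_zero hsol hL hh ⟨hs.1, le_trans hs.2 ht.2⟩

/-- FTC for the `η ψ` boundary term -/
lemma ftcA (hsol : IsWW2D L₁ h g T η ϕ) :
    (∫ x in (0:ℝ)..L₁, η T x * psi η ϕ T x) - (∫ x in (0:ℝ)..L₁, η 0 x * psi η ϕ 0 x)
      = ∫ t in (0:ℝ)..T, ∫ x in (0:ℝ)..L₁,
          (etaT η t x * psi η ϕ t x + η t x * psiT η ϕ t x) := by
  have hη : ContDiff ℝ (⊤:ℕ∞) (Function.uncurry η) := hsol.smooth_eta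
  have hϕ : ContDiff ℝ (⊤:ℕ∞) (unc3 ϕ) := hsol.smooth_phi
  have hψ : ContDiff ℝ (⊤:ℕ∞) (Function.uncurry (psi η ϕ)) := contDiff_psi hη hϕ
  have cEta : Continuous (Function.uncurry η) := hη.continuous
  have cPsi : Continuous (Function.uncurry (psi η ϕ)) := hψ.continuous
  have cEtaT : Continuous (fun p : ℝ×ℝ => etaT η p.1 p.2) := (contDiff_p1 (f := η) hη).continuous
  have cPsiT : Continuous (fun p : ℝ×ℝ => psiT η ϕ p.1 p.2) :=
    (contDiff_p1 (f := psi η ϕ) hψ).continuous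
  have hd : ∀ t, HasDerivAt (fun t => ∫ x in (0:ℝ)..L₁, η t x * psi η ϕ t x)
      (∫ x in (0:ℝ)..L₁, (etaT η t x * psi η ϕ t x + η t x * psiT η ϕ t x)) t := by
    intro t
    refine hasDerivAt_param_integral (f := fun t x => η t x * psi η ϕ t x)
      (f' := fun t x => etaT η t x * psi η ϕ t x + η t x * psiT η ϕ t x) 0 L₁ t
      (by exact cEta.mul cPsi) (by exact (cEtaT.mul cPsi).add (cEta.mul cPsiT))
      (fun t x => ?_)
    have h1 : HasDerivAt (fun s => η s x) (etaT η t x) t := hasDerivAt_p1 (f := η) hη t x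
    have h2 : HasDerivAt (fun s => psi η ϕ s x) (psiT η ϕ t x) t :=
      hasDerivAt_p1 (f := psi η ϕ) hψ t x
    exact h1.mul h2
  symm
  refine intervalIntegral.integral_eq_sub_of_hasDerivAt (fun t _ => hd t) ?_
  refine (intervalIntegral.continuous_parametric_intervalIntegral_of_continuous'
    (f := fun t x => etaT η t x * psi η ϕ t x + η t x * psiT η ϕ t x) ?_ 0 L₁).intervalIntegrable _ _
  exact (cEtaT.mul cPsi).add (cEta.mul cPsiT)

/-- FTC for the `x η ψₓ` boundary term -/
lemma ftcB (hsol : IsWW2D L₁ h g T η ϕ) :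
    (∫ x in (0:ℝ)..L₁, x * η T x * psiX η ϕ T x)
        - (∫ x in (0:ℝ)..L₁, x * η 0 x * psiX η ϕ 0 x)
      = ∫ t in (0:ℝ)..T, ∫ x in (0:ℝ)..L₁,
          (x * etaT η t x * psiX η ϕ t x
            + x * η t x * deriv (fun s => psiX η ϕ s x) t) := by
  have hη : ContDiff ℝ (⊤:ℕ∞) (Function.uncurry η) := hsol.smooth_eta
  have hϕ : ContDiff ℝ (⊤:ℕ∞) (unc3 ϕ) := hsol.smooth_phi
  have hψ : ContDiff ℝ (⊤:ℕ∞) (Function.uncurry (psi η ϕ)) := contDiff_psi hη hϕ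
  have hψX : ContDiff ℝ (⊤:ℕ∞) (Function.uncurry (psiX η ϕ)) := contDiff_p2 (f := psi η ϕ) hψ
  have cEta : Continuous (Function.uncurry η) := hη.continuous
  have cEtaT : Continuous (fun p : ℝ×ℝ => etaT η p.1 p.2) := (contDiff_p1 (f := η) hη).continuous
  have cPsiX : Continuous (Function.uncurry (psiX η ϕ)) := hψX.continuous
  have cPsiXT : Continuous (fun p : ℝ×ℝ => deriv (fun s => psiX η ϕ s p.2) p.1) :=
    (contDiff_p1 (f := psiX η ϕ) hψX).continuous
  have hd : ∀ t, HasDerivAt (fun t => ∫ x in (0:ℝ)..L₁, x * η t x * psiX η ϕ t x)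
      (∫ x in (0:ℝ)..L₁, (x * etaT η t x * psiX η ϕ t x
        + x * η t x * deriv (fun s => psiX η ϕ s x) t)) t := by
    intro t
    refine hasDerivAt_param_integral (f := fun t x => x * η t x * psiX η ϕ t x)
      (f' := fun t x => x * etaT η t x * psiX η ϕ t x
        + x * η t x * deriv (fun s => psiX η ϕ s x) t) 0 L₁ t
      (by exact (continuous_snd.mul cEta).mul cPsiX)
      (by exact ((continuous_snd.mul cEtaT).mul cPsiX).add ((continuous_snd.mul cEta).mul cPsiXT))
      (fun t x => ?_)
    have h1 : HasDerivAt (fun s => x * η s x) (x * etaT η t x) t :=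
      (hasDerivAt_p1 (f := η) hη t x).const_mul x
    have h2 : HasDerivAt (fun s => psiX η ϕ s x) (deriv (fun s => psiX η ϕ s x) t) t :=
      hasDerivAt_p1 (f := psiX η ϕ) hψX t x
    exact h1.mul h2
  symm
  refine intervalIntegral.integral_eq_sub_of_hasDerivAt (fun t _ => hd t) ?_
  have cc : Continuous (Function.uncurry (fun t x => x * etaT η t x * psiX η ϕ t x
      + x * η t x * deriv (fun s => psiX η ϕ s x) t)) :=
    ((continuous_snd.mul cEtaT).mul cPsiX).add ((continuous_snd.mul cEta).mul cPsiXT)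
  exact (intervalIntegral.continuous_parametric_intervalIntegral_of_continuous'
    (f := fun t x => x * etaT η t x * psiX η ϕ t x
      + x * η t x * deriv (fun s => psiX η ϕ s x) t) cc 0 L₁).intervalIntegrable _ _

/-- the pointwise-in-time identity -/
lemma pointwise_identity (hsol : IsWW2D L₁ h g T η ϕ) (hL : 0 < L₁) (hh : 0 < h)
    {t : ℝ} (ht : t ∈ Icc (0:ℝ) T) :
    L₁ * Theta g η ϕ t L₁
      = 1/2 * energy2D L₁ h g η ϕ t
        + L₁ / 2 * (∫ y in (-h)..(η t L₁), (phiY ϕ t L₁ y)^2)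
        + 1/2 * (∫ x in (0:ℝ)..L₁, (h + 7/4 * η t x) * (phiX ϕ t x (-h))^2)
        - 1/4 * (∫ x in (0:ℝ)..L₁, (etaT η t x * psi η ϕ t x + η t x * psiT η ϕ t x))
        - (∫ x in (0:ℝ)..L₁, (x * etaT η t x * psiX η ϕ t x
            + x * η t x * deriv (fun s => psiX η ϕ s x) t))
        - 7/4 * ∫ x in (0:ℝ)..L₁, ∫ y in (-h)..(η t x),
            etaX η t x * phiX ϕ t x y * phiY ϕ t x y := by
  have hη : ContDiff ℝ (⊤:ℕ∞) (Function.uncurry η) := hsol.smooth_eta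
  have hϕ : ContDiff ℝ (⊤:ℕ∞) (unc3 ϕ) := hsol.smooth_phi
  have hψ : ContDiff ℝ (⊤:ℕ∞) (Function.uncurry (psi η ϕ)) := contDiff_psi hη hϕ
  -- continuity atoms (functions of x, at fixed t)
  have cEx : Continuous (fun x => η t x) := hη.continuous.comp (Continuous.prodMk_right t)
  have cE' : Continuous (fun x => etaX η t x) :=
    (contDiff_p2 (f := η) hη).continuous.comp (Continuous.prodMk_right t)
  have cET : Continuous (fun x => etaT η t x) :=
    (contDiff_p1 (f := η) hη).continuous.comp (Continuous.prodMk_right t)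
  have cPsi : Continuous (fun x => psi η ϕ t x) := hψ.continuous.comp (Continuous.prodMk_right t)
  have cPsiT : Continuous (fun x => psiT η ϕ t x) :=
    (contDiff_p1 (f := psi η ϕ) hψ).continuous.comp (Continuous.prodMk_right t)
  have cPsiX : Continuous (fun x => psiX η ϕ t x) :=
    (contDiff_p2 (f := psi η ϕ) hψ).continuous.comp (Continuous.prodMk_right t)
  have cPsiTX : Continuous (fun x => deriv (fun x' => psiT η ϕ t x') x) :=
    (contDiff_p2 (f := psiT η ϕ) (contDiff_p1 (f := psi η ϕ) hψ)).continuous.comp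
      (Continuous.prodMk_right t)
  have cPsiXT : Continuous (fun x => deriv (fun s => psiX η ϕ s x) t) := by
    have := (contDiff_p1 (f := psiX η ϕ) (contDiff_p2 (f := psi η ϕ) hψ)).continuous
    exact this.comp (Continuous.prodMk_right t)
  have cmkS : Continuous (fun x : ℝ => ((t, x, η t x) : ℝ×ℝ×ℝ)) :=
    continuous_const.prodMk (continuous_id.prodMk cEx)
  have cSX : Continuous (fun x => phiX ϕ t x (η t x)) :=
    (contDiff_q2 (f := ϕ) hϕ).continuous.comp cmkS
  have cSY : Continuous (fun x => phiY ϕ t x (η t x)) :=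
    (contDiff_q3 (f := ϕ) hϕ).continuous.comp cmkS
  -- h1 : the A-derivative
  have h1 : (∫ x in (0:ℝ)..L₁, (etaT η t x * psi η ϕ t x + η t x * psiT η ϕ t x))
      = (∫ x in (0:ℝ)..L₁, ∫ y in (-h)..(η t x), ((phiX ϕ t x y)^2 + (phiY ϕ t x y)^2))
        + ∫ x in (0:ℝ)..L₁, η t x * psiT η ϕ t x := by
    rw [intervalIntegral.integral_add ((cET.fun_mul cPsi).intervalIntegrable _ _)
      ((cEx.fun_mul cPsiT).intervalIntegrable _ _), kinetic_flux hsol hL hh ht]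
  -- h2 : the B-derivative, after integration by parts in x
  have hcomm : ∀ x : ℝ, deriv (fun s => psiX η ϕ s x) t = deriv (fun x' => psiT η ϕ t x') x :=
    fun x => p_comm (f := psi η ϕ) hψ t x
  have s1 : (∫ x in (0:ℝ)..L₁, (x * etaT η t x * psiX η ϕ t x
      + x * η t x * deriv (fun s => psiX η ϕ s x) t))
      = (∫ x in (0:ℝ)..L₁, x * etaT η t x * psiX η ϕ t x)
        + ∫ x in (0:ℝ)..L₁, x * η t x * deriv (fun x' => psiT η ϕ t x') x := by
    rw [intervalIntegral.integral_add (((continuous_id'.fun_mul cET).fun_mul cPsiX).intervalIntegrable _ _)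
      (((continuous_id'.fun_mul cEx).fun_mul cPsiXT).intervalIntegrable _ _)]
    congr 1
    exact intervalIntegral.integral_congr fun x _ => by rw [hcomm x]
  have s3 : (∫ x in (0:ℝ)..L₁, ((1 * η t x + x * etaX η t x) * psiT η ϕ t x
      + x * η t x * deriv (fun x' => psiT η ϕ t x') x))
      = L₁ * η t L₁ * psiT η ϕ t L₁ - 0 * η t 0 * psiT η ϕ t 0 := by
    refine intervalIntegral.integral_eq_sub_of_hasDerivAt
      (f := fun x => x * η t x * psiT η ϕ t x) (fun x _ => ?_) ?_
    · have h3 : HasDerivAt (fun x' => η t x') (etaX η t x) x := hasDerivAt_p2 (f := η) hη t x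
      have h4 : HasDerivAt (fun x' => psiT η ϕ t x') (deriv (fun x' => psiT η ϕ t x') x) x :=
        hasDerivAt_p2 (f := psiT η ϕ) (contDiff_p1 (f := psi η ϕ) hψ) t x
      have H := ((hasDerivAt_id x).fun_mul h3).fun_mul h4
      refine hasDerivAt_congr_d H ?_
      simp only [id_eq]
    · exact ((((continuous_const.mul cEx).add (continuous_id'.mul cE')).mul cPsiT).add
        ((continuous_id'.mul cEx).mul cPsiTX)).intervalIntegrable _ _
  have s4 : (∫ x in (0:ℝ)..L₁, ((1 * η t x + x * etaX η t x) * psiT η ϕ t x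
      + x * η t x * deriv (fun x' => psiT η ϕ t x') x))
      = (∫ x in (0:ℝ)..L₁, η t x * psiT η ϕ t x)
        + ((∫ x in (0:ℝ)..L₁, x * etaX η t x * psiT η ϕ t x)
          + ∫ x in (0:ℝ)..L₁, x * η t x * deriv (fun x' => psiT η ϕ t x') x) := by
    rw [← intervalIntegral.integral_add (((continuous_id'.fun_mul cE').fun_mul cPsiT).intervalIntegrable _ _)
        (((continuous_id'.fun_mul cEx).fun_mul cPsiTX).intervalIntegrable _ _),
      ← intervalIntegral.integral_add ((cEx.fun_mul cPsiT).intervalIntegrable _ _)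
        ((((continuous_id'.fun_mul cE').fun_mul cPsiT).fun_add
          ((continuous_id'.fun_mul cEx).fun_mul cPsiTX)).intervalIntegrable _ _)]
    exact intervalIntegral.integral_congr fun x _ => by ring
  have h2 : (∫ x in (0:ℝ)..L₁, (x * etaT η t x * psiX η ϕ t x
      + x * η t x * deriv (fun s => psiX η ϕ s x) t))
      = (∫ x in (0:ℝ)..L₁, x * etaT η t x * psiX η ϕ t x)
        + (L₁ * η t L₁ * psiT η ϕ t L₁ - 0 * η t 0 * psiT η ϕ t 0)
        - (∫ x in (0:ℝ)..L₁, η t x * psiT η ϕ t x)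
        - ∫ x in (0:ℝ)..L₁, x * etaX η t x * psiT η ϕ t x := by
    linarith [s1, s3, s4]
  -- h3 : the surface substitution
  have hpt : (∫ x in (0:ℝ)..L₁, (x * etaT η t x * psiX η ϕ t x
      - x * etaX η t x * psiT η ϕ t x - 3/4 * (η t x * psiT η ϕ t x)))
      = ∫ x in (0:ℝ)..L₁,
          (x * (phiX ϕ t x (η t x) * phiY ϕ t x (η t x))
            + x * etaX η t x * ((phiY ϕ t x (η t x))^2 - (phiX ϕ t x (η t x))^2) / 2
            + η t x * ((phiX ϕ t x (η t x))^2 - (phiY ϕ t x (η t x))^2) * (3/8)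
            + η t x * etaX η t x * (phiX ϕ t x (η t x) * phiY ϕ t x (η t x)) * (3/4)
           + g / 2 * (x * (2 * η t x * etaX η t x)) + 3/4 * g * (η t x)^2) := by
    refine intervalIntegral.integral_congr fun x hx => ?_
    rw [uIcc_of_le hL.le] at hx
    rw [psiX_eq hη hϕ t x, psiT_eq hη hϕ t x]
    have hkin := hsol.kinematic t ht x hx
    have hb := hsol.bernoulli t ht x hx
    linear_combination (x * phiX ϕ t x (η t x) - 3/4 * (η t x * phiY ϕ t x (η t x))) * hkin
      + (-(x * etaX η t x) - 3/4 * η t x) * hb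
  have cL : (∫ x in (0:ℝ)..L₁, (x * etaT η t x * psiX η ϕ t x
      - x * etaX η t x * psiT η ϕ t x - 3/4 * (η t x * psiT η ϕ t x)))
      = (∫ x in (0:ℝ)..L₁, x * etaT η t x * psiX η ϕ t x)
        - (∫ x in (0:ℝ)..L₁, x * etaX η t x * psiT η ϕ t x)
        - 3/4 * ∫ x in (0:ℝ)..L₁, η t x * psiT η ϕ t x := by
    rw [intervalIntegral.integral_sub ((((continuous_id'.fun_mul cET).fun_mul cPsiX).fun_sub
        ((continuous_id'.fun_mul cE').fun_mul cPsiT)).intervalIntegrable _ _)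
      ((continuous_const.fun_mul (cEx.fun_mul cPsiT)).intervalIntegrable _ _),
      intervalIntegral.integral_sub (((continuous_id'.fun_mul cET).fun_mul cPsiX).intervalIntegrable _ _)
      (((continuous_id'.fun_mul cE').fun_mul cPsiT).intervalIntegrable _ _),
      intervalIntegral.integral_const_mul]
  have cR : (∫ x in (0:ℝ)..L₁,
      (x * (phiX ϕ t x (η t x) * phiY ϕ t x (η t x))
        + x * etaX η t x * ((phiY ϕ t x (η t x))^2 - (phiX ϕ t x (η t x))^2) / 2
        + η t x * ((phiX ϕ t x (η t x))^2 - (phiY ϕ t x (η t x))^2) * (3/8)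
        + η t x * etaX η t x * (phiX ϕ t x (η t x) * phiY ϕ t x (η t x)) * (3/4)
       + g / 2 * (x * (2 * η t x * etaX η t x)) + 3/4 * g * (η t x)^2))
      = (∫ x in (0:ℝ)..L₁,
          (x * (phiX ϕ t x (η t x) * phiY ϕ t x (η t x))
            + x * etaX η t x * ((phiY ϕ t x (η t x))^2 - (phiX ϕ t x (η t x))^2) / 2
            + η t x * ((phiX ϕ t x (η t x))^2 - (phiY ϕ t x (η t x))^2) * (3/8)
            + η t x * etaX η t x * (phiX ϕ t x (η t x) * phiY ϕ t x (η t x)) * (3/4)))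
        + g / 2 * (∫ x in (0:ℝ)..L₁, x * (2 * η t x * etaX η t x))
        + 3/4 * g * ∫ x in (0:ℝ)..L₁, (η t x)^2 := by
    have cSURF : Continuous (fun x =>
        x * (phiX ϕ t x (η t x) * phiY ϕ t x (η t x))
          + x * etaX η t x * ((phiY ϕ t x (η t x))^2 - (phiX ϕ t x (η t x))^2) / 2
          + η t x * ((phiX ϕ t x (η t x))^2 - (phiY ϕ t x (η t x))^2) * (3/8)
          + η t x * etaX η t x * (phiX ϕ t x (η t x) * phiY ϕ t x (η t x)) * (3/4)) :=
      (((continuous_id'.mul (cSX.mul cSY)).add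
        (((continuous_id'.mul cE').mul ((cSY.pow 2).sub (cSX.pow 2))).div_const 2)).add
        ((cEx.mul ((cSX.pow 2).sub (cSY.pow 2))).mul continuous_const)).add
        (((cEx.mul cE').mul (cSX.mul cSY)).mul continuous_const)
    rw [intervalIntegral.integral_add ((cSURF.fun_add (continuous_const.fun_mul
        (continuous_id'.fun_mul ((continuous_const.fun_mul cEx).fun_mul cE')))).intervalIntegrable _ _)
      ((continuous_const.fun_mul (cEx.fun_pow 2)).intervalIntegrable _ _),
      intervalIntegral.integral_add (cSURF.intervalIntegrable _ _)
      ((continuous_const.fun_mul (continuous_id'.fun_mul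
        ((continuous_const.fun_mul cEx).fun_mul cE'))).intervalIntegrable _ _),
      intervalIntegral.integral_const_mul, intervalIntegral.integral_const_mul]
  have h3 : (∫ x in (0:ℝ)..L₁, x * etaT η t x * psiX η ϕ t x)
      - (∫ x in (0:ℝ)..L₁, x * etaX η t x * psiT η ϕ t x)
      - 3/4 * (∫ x in (0:ℝ)..L₁, η t x * psiT η ϕ t x)
      = (∫ x in (0:ℝ)..L₁,
          (x * (phiX ϕ t x (η t x) * phiY ϕ t x (η t x))
            + x * etaX η t x * ((phiY ϕ t x (η t x))^2 - (phiX ϕ t x (η t x))^2) / 2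
            + η t x * ((phiX ϕ t x (η t x))^2 - (phiY ϕ t x (η t x))^2) * (3/8)
            + η t x * etaX η t x * (phiX ϕ t x (η t x) * phiY ϕ t x (η t x)) * (3/4)))
        + g / 2 * (∫ x in (0:ℝ)..L₁, x * (2 * η t x * etaX η t x))
        + 3/4 * g * ∫ x in (0:ℝ)..L₁, (η t x)^2 := by
    rw [← cL, ← cR]; exact hpt
  -- h4 : the g-integration by parts
  have hIBg : (∫ x in (0:ℝ)..L₁, ((η t x)^2 + x * (2 * η t x * etaX η t x)))
      = L₁ * (η t L₁)^2 - 0 * (η t 0)^2 := by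
    refine intervalIntegral.integral_eq_sub_of_hasDerivAt
      (f := fun x => x * (η t x)^2) (fun x _ => ?_) ?_
    · have h3 : HasDerivAt (fun x' => η t x') (etaX η t x) x := hasDerivAt_p2 (f := η) hη t x
      have H := (hasDerivAt_id x).fun_mul (h3.fun_pow 2)
      refine hasDerivAt_congr_d H ?_
      simp only [id_eq]
      push_cast
      ring
    · exact ((cEx.pow 2).add (continuous_id'.mul
        ((continuous_const.mul cEx).mul cE'))).intervalIntegrable _ _
  have h4 : (∫ x in (0:ℝ)..L₁, (η t x)^2)
      + (∫ x in (0:ℝ)..L₁, x * (2 * η t x * etaX η t x))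
      = L₁ * (η t L₁)^2 - 0 * (η t 0)^2 := by
    rw [← intervalIntegral.integral_add ((cEx.fun_pow 2).intervalIntegrable _ _)
      ((continuous_id'.fun_mul ((continuous_const.fun_mul cEx).fun_mul cE')).intervalIntegrable _ _)]
    exact hIBg
  have h5 := pohozaev_green hsol hL hh ht
  have h6 : energy2D L₁ h g η ϕ t
      = g / 2 * (∫ x in (0:ℝ)..L₁, (η t x)^2)
        + 1 / 2 * ∫ x in (0:ℝ)..L₁, ∫ y in (-h)..(η t x),
            ((phiX ϕ t x y)^2 + (phiY ϕ t x y)^2) := rfl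
  have hTheta : Theta g η ϕ t L₁
      = -(η t L₁) * psiT η ϕ t L₁ - g / 2 * (η t L₁)^2 := rfl
  rw [hTheta, h6]
  linear_combination (1/4 : ℝ) * h1 + h2 + h3 + (g/2) * h4 + h5

end Main
end WW

open WW intervalIntegral in
set_option maxHeartbeats 2000000 in
/-- the main identity (Theorem 1.3) for two-dimensional waves. -/
theorem main_identity_2d
    (L₁ h g T : ℝ) (hL : 0 < L₁) (hh : 0 < h) (hg : 0 < g) (hT : 0 < T)
    (η : ℝ → ℝ → ℝ) (ϕ : ℝ → ℝ → ℝ → ℝ) (hsol : IsWW2D L₁ h g T η ϕ) :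
    L₁ * ∫ t in (0:ℝ)..T, Theta g η ϕ t L₁
      = T / 2 * energy2D L₁ h g η ϕ 0
        + L₁ / 2 * (∫ t in (0:ℝ)..T, ∫ y in (-h)..(η t L₁), (phiY ϕ t L₁ y) ^ 2)
        + 1 / 2 * (∫ t in (0:ℝ)..T, ∫ x in (0:ℝ)..L₁,
            (h + 7 / 4 * η t x) * (phiX ϕ t x (-h)) ^ 2)
        - 1 / 4 * ((∫ x in (0:ℝ)..L₁, η T x * psi η ϕ T x)
            - ∫ x in (0:ℝ)..L₁, η 0 x * psi η ϕ 0 x)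
        - ((∫ x in (0:ℝ)..L₁, x * η T x * psiX η ϕ T x)
            - ∫ x in (0:ℝ)..L₁, x * η 0 x * psiX η ϕ 0 x)
        - 7 / 4 * ∫ t in (0:ℝ)..T, ∫ x in (0:ℝ)..L₁, ∫ y in (-h)..(η t x),
            etaX η t x * phiX ϕ t x y * phiY ϕ t x y := by
  have hη : ContDiff ℝ (⊤:ℕ∞) (Function.uncurry η) := hsol.smooth_eta
  have hϕ : ContDiff ℝ (⊤:ℕ∞) (unc3 ϕ) := hsol.smooth_phi
  have hψ : ContDiff ℝ (⊤:ℕ∞) (Function.uncurry (psi η ϕ)) := contDiff_psi hη hϕ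
  -- continuity in t of all the pieces
  have cmkL : Continuous (fun t : ℝ => ((t, L₁) : ℝ×ℝ)) :=
    continuous_id.prodMk continuous_const
  have cEtaL : Continuous (fun t => η t L₁) := hη.continuous.comp cmkL
  have cPsiTL : Continuous (fun t => psiT η ϕ t L₁) :=
    (contDiff_p1 (f := psi η ϕ) hψ).continuous.comp cmkL
  have cTheta : Continuous (fun t => Theta g η ϕ t L₁) :=
    ((cEtaL.neg).mul cPsiTL).sub (continuous_const.mul (cEtaL.pow 2))
  have cJ : Continuous (fun t => ∫ y in (-h)..(η t L₁), (phiY ϕ t L₁ y)^2) := by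
    refine intervalIntegral.continuous_parametric_intervalIntegral_of_continuous
      (f := fun t y => (phiY ϕ t L₁ y)^2) ?_ cEtaL
    exact ((contDiff_q3 (f := ϕ) hϕ).continuous.comp
      (continuous_fst.prodMk (continuous_const.prodMk continuous_snd))).pow 2
  have cEta : Continuous (Function.uncurry η) := hη.continuous
  have cEtaTj : Continuous (fun p : ℝ×ℝ => etaT η p.1 p.2) := (contDiff_p1 (f := η) hη).continuous
  have cEtaXj : Continuous (fun p : ℝ×ℝ => etaX η p.1 p.2) := (contDiff_p2 (f := η) hη).continuous
  have cPsij : Continuous (Function.uncurry (psi η ϕ)) := hψ.continuous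
  have cPsiTj : Continuous (fun p : ℝ×ℝ => psiT η ϕ p.1 p.2) :=
    (contDiff_p1 (f := psi η ϕ) hψ).continuous
  have cPsiXj : Continuous (Function.uncurry (psiX η ϕ)) :=
    (contDiff_p2 (f := psi η ϕ) hψ).continuous
  have cPsiXTj : Continuous (fun p : ℝ×ℝ => deriv (fun s => psiX η ϕ s p.2) p.1) :=
    (contDiff_p1 (f := psiX η ϕ) (contDiff_p2 (f := psi η ϕ) hψ)).continuous
  have cmkB : Continuous (fun p : ℝ×ℝ => ((p.1, p.2, -h) : ℝ×ℝ×ℝ)) :=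
    continuous_fst.prodMk (continuous_snd.prodMk continuous_const)
  have cBXj : Continuous (fun p : ℝ×ℝ => phiX ϕ p.1 p.2 (-h)) :=
    (contDiff_q2 (f := ϕ) hϕ).continuous.comp cmkB
  have cBb : Continuous (fun t => ∫ x in (0:ℝ)..L₁, (h + 7/4 * η t x) * (phiX ϕ t x (-h))^2) := by
    refine intervalIntegral.continuous_parametric_intervalIntegral_of_continuous'
      (f := fun t x => (h + 7/4 * η t x) * (phiX ϕ t x (-h))^2) ?_ 0 L₁
    exact ((continuous_const.add (continuous_const.mul cEta)).mul (cBXj.pow 2))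
  have cA' : Continuous (fun t => ∫ x in (0:ℝ)..L₁,
      (etaT η t x * psi η ϕ t x + η t x * psiT η ϕ t x)) := by
    refine intervalIntegral.continuous_parametric_intervalIntegral_of_continuous'
      (f := fun t x => etaT η t x * psi η ϕ t x + η t x * psiT η ϕ t x) ?_ 0 L₁
    exact (cEtaTj.mul cPsij).add (cEta.mul cPsiTj)
  have cB' : Continuous (fun t => ∫ x in (0:ℝ)..L₁,
      (x * etaT η t x * psiX η ϕ t x + x * η t x * deriv (fun s => psiX η ϕ s x) t)) := by
    refine intervalIntegral.continuous_parametric_intervalIntegral_of_continuous'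
      (f := fun t x => x * etaT η t x * psiX η ϕ t x
        + x * η t x * deriv (fun s => psiX η ϕ s x) t) ?_ 0 L₁
    exact ((continuous_snd.mul cEtaTj).mul cPsiXj).add ((continuous_snd.mul cEta).mul cPsiXTj)
  have cmk2 : Continuous (fun q : (ℝ×ℝ)×ℝ => ((q.1.1, q.1.2, q.2) : ℝ×ℝ×ℝ)) :=
    (continuous_fst.comp continuous_fst).prodMk
      ((continuous_snd.comp continuous_fst).prodMk continuous_snd)
  have cX3 : Continuous (fun t => ∫ x in (0:ℝ)..L₁, ∫ y in (-h)..(η t x),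
      etaX η t x * phiX ϕ t x y * phiY ϕ t x y) := by
    refine intervalIntegral.continuous_parametric_intervalIntegral_of_continuous'
      (f := fun t x => ∫ y in (-h)..(η t x), etaX η t x * phiX ϕ t x y * phiY ϕ t x y) ?_ 0 L₁
    refine intervalIntegral.continuous_parametric_intervalIntegral_of_continuous
      (f := fun p : ℝ×ℝ => fun y => etaX η p.1 p.2 * phiX ϕ p.1 p.2 y * phiY ϕ p.1 p.2 y)
      ?_ cEta
    exact ((cEtaXj.comp continuous_fst).mul
      ((contDiff_q2 (f := ϕ) hϕ).continuous.comp cmk2)).mul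
      ((contDiff_q3 (f := ϕ) hϕ).continuous.comp cmk2)
  have cW2j : Continuous (Function.uncurry
      (fun p : ℝ×ℝ => fun y => (phiX ϕ p.1 p.2 y)^2 + (phiY ϕ p.1 p.2 y)^2)) :=
    (((contDiff_q2 (f := ϕ) hϕ).continuous.comp cmk2).pow 2).add
      (((contDiff_q3 (f := ϕ) hϕ).continuous.comp cmk2).pow 2)
  have cEn : Continuous (energy2D L₁ h g η ϕ) := by
    refine (continuous_const.mul ?_).add (continuous_const.mul ?_)
    · exact intervalIntegral.continuous_parametric_intervalIntegral_of_continuous'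
        (f := fun t x => (η t x)^2) (cEta.fun_pow 2) 0 L₁
    · refine intervalIntegral.continuous_parametric_intervalIntegral_of_continuous'
        (f := fun t x => ∫ y in (-h)..(η t x), ((phiX ϕ t x y)^2 + (phiY ϕ t x y)^2)) ?_ 0 L₁
      exact intervalIntegral.continuous_parametric_intervalIntegral_of_continuous
        (f := fun p : ℝ×ℝ => fun y => (phiX ϕ p.1 p.2 y)^2 + (phiY ϕ p.1 p.2 y)^2) cW2j cEta
  -- replace the boundary differences by time integrals
  rw [ftcA hsol, ftcB hsol]
  -- replace T/2 * energy(0) by the time integral of energy/2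
  have hE : (∫ t in (0:ℝ)..T, 1/2 * energy2D L₁ h g η ϕ t)
      = T / 2 * energy2D L₁ h g η ϕ 0 := by
    rw [intervalIntegral.integral_congr
      (g := fun _ => 1/2 * energy2D L₁ h g η ϕ 0) (fun s hs => ?_),
      intervalIntegral.integral_const, smul_eq_mul]
    · ring
    · rw [uIcc_of_le hT.le] at hs
      rw [energy_const hsol hL hh hs]
  rw [← hE]
  -- now everything is a single time integral
  have key : ∀ t ∈ uIcc (0:ℝ) T, L₁ * Theta g η ϕ t L₁
      = (1/2 * energy2D L₁ h g η ϕ t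
        + L₁ / 2 * (∫ y in (-h)..(η t L₁), (phiY ϕ t L₁ y)^2)
        + 1/2 * (∫ x in (0:ℝ)..L₁, (h + 7/4 * η t x) * (phiX ϕ t x (-h))^2)
        - 1/4 * (∫ x in (0:ℝ)..L₁, (etaT η t x * psi η ϕ t x + η t x * psiT η ϕ t x))
        - (∫ x in (0:ℝ)..L₁, (x * etaT η t x * psiX η ϕ t x
            + x * η t x * deriv (fun s => psiX η ϕ s x) t))
        - 7/4 * ∫ x in (0:ℝ)..L₁, ∫ y in (-h)..(η t x),
            etaX η t x * phiX ϕ t x y * phiY ϕ t x y) := by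
    intro t htt
    rw [uIcc_of_le hT.le] at htt
    exact pointwise_identity hsol hL hh htt
  have hsplit : (∫ t in (0:ℝ)..T, (1/2 * energy2D L₁ h g η ϕ t
        + L₁ / 2 * (∫ y in (-h)..(η t L₁), (phiY ϕ t L₁ y)^2)
        + 1/2 * (∫ x in (0:ℝ)..L₁, (h + 7/4 * η t x) * (phiX ϕ t x (-h))^2)
        - 1/4 * (∫ x in (0:ℝ)..L₁, (etaT η t x * psi η ϕ t x + η t x * psiT η ϕ t x))
        - (∫ x in (0:ℝ)..L₁, (x * etaT η t x * psiX η ϕ t x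
            + x * η t x * deriv (fun s => psiX η ϕ s x) t))
        - 7/4 * ∫ x in (0:ℝ)..L₁, ∫ y in (-h)..(η t x),
            etaX η t x * phiX ϕ t x y * phiY ϕ t x y))
      = (∫ t in (0:ℝ)..T, 1/2 * energy2D L₁ h g η ϕ t)
        + L₁ / 2 * (∫ t in (0:ℝ)..T, ∫ y in (-h)..(η t L₁), (phiY ϕ t L₁ y)^2)
        + 1/2 * (∫ t in (0:ℝ)..T, ∫ x in (0:ℝ)..L₁, (h + 7/4 * η t x) * (phiX ϕ t x (-h))^2)
        - 1/4 * (∫ t in (0:ℝ)..T, ∫ x in (0:ℝ)..L₁,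
            (etaT η t x * psi η ϕ t x + η t x * psiT η ϕ t x))
        - (∫ t in (0:ℝ)..T, ∫ x in (0:ℝ)..L₁, (x * etaT η t x * psiX η ϕ t x
            + x * η t x * deriv (fun s => psiX η ϕ s x) t))
        - 7/4 * ∫ t in (0:ℝ)..T, ∫ x in (0:ℝ)..L₁, ∫ y in (-h)..(η t x),
            etaX η t x * phiX ϕ t x y * phiY ϕ t x y := by
    have i1 : IntervalIntegrable (fun t => 1/2 * energy2D L₁ h g η ϕ t) volume 0 T :=
      (continuous_const.mul cEn).intervalIntegrable _ _
    have i2 : IntervalIntegrable (fun t =>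
        L₁ / 2 * ∫ y in (-h)..(η t L₁), (phiY ϕ t L₁ y)^2) volume 0 T :=
      (continuous_const.mul cJ).intervalIntegrable _ _
    have i3 : IntervalIntegrable (fun t =>
        1/2 * ∫ x in (0:ℝ)..L₁, (h + 7/4 * η t x) * (phiX ϕ t x (-h))^2) volume 0 T :=
      (continuous_const.mul cBb).intervalIntegrable _ _
    have i4 : IntervalIntegrable (fun t => 1/4 * ∫ x in (0:ℝ)..L₁,
        (etaT η t x * psi η ϕ t x + η t x * psiT η ϕ t x)) volume 0 T :=
      (continuous_const.mul cA').intervalIntegrable _ _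
    have i5 : IntervalIntegrable (fun t => ∫ x in (0:ℝ)..L₁,
        (x * etaT η t x * psiX η ϕ t x
          + x * η t x * deriv (fun s => psiX η ϕ s x) t)) volume 0 T :=
      cB'.intervalIntegrable _ _
    have i6 : IntervalIntegrable (fun t => 7/4 * ∫ x in (0:ℝ)..L₁, ∫ y in (-h)..(η t x),
        etaX η t x * phiX ϕ t x y * phiY ϕ t x y) volume 0 T :=
      (continuous_const.mul cX3).intervalIntegrable _ _
    rw [intervalIntegral.integral_sub ((((i1.add i2).add i3).sub i4).sub i5) i6,
      intervalIntegral.integral_sub (((i1.add i2).add i3).sub i4) i5,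
      intervalIntegral.integral_sub ((i1.add i2).add i3) i4,
      intervalIntegral.integral_add (i1.add i2) i3,
      intervalIntegral.integral_add i1 i2,
      intervalIntegral.integral_const_mul, intervalIntegral.integral_const_mul,
      intervalIntegral.integral_const_mul, intervalIntegral.integral_const_mul,
      intervalIntegral.integral_const_mul]
  calc L₁ * ∫ t in (0:ℝ)..T, Theta g η ϕ t L₁
      = ∫ t in (0:ℝ)..T, L₁ * Theta g η ϕ t L₁ :=
        (intervalIntegral.integral_const_mul _ _).symm
    _ = _ := by rw [intervalIntegral.integral_congr (fun t htt => key t htt), hsplit]
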